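/- arXiv:2012.02025 — 5 statements merged into one kernel-verified Lean document; each statement's English description precedes it below -/
import Mathlib

section
/- Suppose assumption (A1) holds with d ≥ 2, η0 : [0,∞) → [0,∞) is continuous and nonincreasing, and the map x ↦ η0(|θ0 − x|²) is nonconstant on some open ball contained in χ. If g : [0,∞) → [0,∞) and β ∈ ℝ^d satisfy η0(|θ0 − x|²) = g(|β − x|²) for every x ∈ χ, then β = θ0 and g(t) = η0(t) for every t ∈ {|θ0 − x|² : x ∈ χ}. (Identifiability of the location and attenuation function, Lemma 2.1.) -/
open MeasureTheory Set Metric Filter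
open scoped RealInnerProductSpace


section Aux
variable {E : Type*} [NormedAddCommGroup E] [InnerProductSpace ℝ E]

lemma aux_one_sub_cos_le (φ : ℝ) : 1 - Real.cos φ ≤ φ ^ 2 / 2 := by
  have h1 := Real.sin_sq_add_cos_sq (φ/2)
  have h2 : Real.cos (2*(φ/2)) = Real.cos (φ/2)^2 - Real.sin (φ/2)^2 := Real.cos_two_mul' _
  have h3 : Real.sin (φ/2)^2 ≤ (φ/2)^2 := by
    have := Real.abs_sin_le_abs (x := φ/2)
    calc Real.sin (φ/2)^2 = |Real.sin (φ/2)|^2 := (sq_abs _).symm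
      _ ≤ |φ/2|^2 := by gcongr
      _ = (φ/2)^2 := sq_abs _
  have h4 : (2:ℝ)*(φ/2) = φ := by ring
  rw [h4] at h2
  nlinarith

lemma aux_goodify (u v : E) (hu : u ≠ 0) (hind : ∀ a : ℝ, v ≠ a • u) :
    ∃ w : E, ‖w‖ = 1 ∧ ⟪u, w⟫ = 0 ∧ 0 < ⟪v, w⟫ := by
  have hnu : ‖u‖ ^ 2 ≠ 0 := pow_ne_zero _ (norm_ne_zero_iff.mpr hu)
  set c : ℝ := ⟪v, u⟫ / ‖u‖ ^ 2 with hc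
  set w0 : E := v - c • u with hw0
  have hw0ne : w0 ≠ 0 := by
    intro h
    exact hind c (sub_eq_zero.mp h)
  have huw0 : ⟪u, w0⟫ = 0 := by
    rw [hw0, inner_sub_right, real_inner_smul_right, real_inner_self_eq_norm_sq, hc,
      real_inner_comm u v]
    field_simp
    ring
  have hvw0 : ⟪v, w0⟫ = ‖w0‖ ^ 2 := by
    have hv : v = w0 + c • u := by rw [hw0]; abel
    calc ⟪v, w0⟫ = ⟪w0, w0⟫ + c * ⟪u, w0⟫ := by
          rw [hv, inner_add_left, real_inner_smul_left]
      _ = ‖w0‖ ^ 2 := by rw [huw0, real_inner_self_eq_norm_sq]; ring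
  have hw0pos : 0 < ‖w0‖ := norm_pos_iff.mpr hw0ne
  refine ⟨‖w0‖⁻¹ • w0, ?_, ?_, ?_⟩
  · rw [norm_smul, norm_inv, norm_norm, inv_mul_cancel₀ hw0pos.ne']
  · rw [real_inner_smul_right, huw0, mul_zero]
  · rw [real_inner_smul_right, hvw0]
    positivity

end Aux


lemma aux_exists_orth {d : ℕ} (hd : 2 ≤ d) (v : EuclideanSpace ℝ (Fin d)) :
    ∃ w : EuclideanSpace ℝ (Fin d), ‖w‖ = 1 ∧ ⟪v, w⟫ = 0 := by
  have hdim : Module.finrank ℝ (EuclideanSpace ℝ (Fin d)) = d := finrank_euclideanSpace_fin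
  have hnt : Nontrivial (EuclideanSpace ℝ (Fin d)) := by
    apply Module.nontrivial_of_finrank_pos (R := ℝ)
    rw [hdim]; omega
  rcases eq_or_ne v 0 with hv | hv
  · obtain ⟨y, hy⟩ := exists_ne (0 : EuclideanSpace ℝ (Fin d))
    have hypos : 0 < ‖y‖ := norm_pos_iff.mpr hy
    refine ⟨‖y‖⁻¹ • y, ?_, ?_⟩
    · rw [norm_smul, norm_inv, norm_norm, inv_mul_cancel₀ hypos.ne']
    · rw [hv, inner_zero_left]
  have hne : (ℝ ∙ v)ᗮ ≠ ⊥ := by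
    intro h
    have htop : (ℝ ∙ v) = ⊤ := Submodule.orthogonal_eq_bot_iff.mp h
    have h1 : Module.finrank ℝ (ℝ ∙ v) = 1 := finrank_span_singleton hv
    rw [htop, finrank_top, hdim] at h1
    omega
  obtain ⟨w0, hw0mem, hw0ne⟩ := Submodule.exists_mem_ne_zero_of_ne_bot hne
  have hvw0 : ⟪v, w0⟫ = 0 := by
    have := (Submodule.mem_orthogonal (ℝ ∙ v) w0).mp hw0mem v (Submodule.mem_span_singleton_self v)
    simpa [real_inner_comm] using this
  have hw0pos : 0 < ‖w0‖ := norm_pos_iff.mpr hw0ne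
  refine ⟨‖w0‖⁻¹ • w0, ?_, ?_⟩
  · rw [norm_smul, norm_inv, norm_norm, inv_mul_cancel₀ hw0pos.ne']
  · rw [real_inner_smul_right, hvw0, mul_zero]


set_option maxHeartbeats 1000000 in
lemma aux_stepA {E : Type*} [NormedAddCommGroup E] [InnerProductSpace ℝ E]
    (η0 g : ℝ → ℝ) (θ0 β c : E) (r : ℝ)
    (heqB : ∀ y ∈ ball c r, η0 (‖θ0 - y‖ ^ 2) = g (‖β - y‖ ^ 2))
    (x : E) (hx : x ∈ ball c r) (hxβ : x ≠ β)
    (w : E) (hw1 : ‖w‖ = 1) (hwu : ⟪x - β, w⟫ = 0) (hwv : 0 < ⟪θ0 - β, w⟫) :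
    ∃ ε > 0, ∀ t : ℝ, 0 ≤ t → |t - ‖θ0 - x‖| < ε → η0 (t ^ 2) = η0 (‖θ0 - x‖ ^ 2) := by
  set u : E := x - β with hu
  set v : E := θ0 - β with hv
  set s : ℝ := ‖u‖ with hs
  have hspos : 0 < s := norm_pos_iff.mpr (sub_ne_zero.mpr hxβ)
  set cvu : ℝ := ⟪v, u⟫ with hcvu
  set cvw : ℝ := ⟪v, w⟫ with hcvw
  -- the rotated points
  set z : ℝ → E := fun φ => β + Real.cos φ • u + (s * Real.sin φ) • w with hz
  have hz0 : z 0 = x := by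
    simp only [hz, Real.cos_zero, Real.sin_zero, one_smul, mul_zero, zero_smul, add_zero, hu]
    abel
  have hzc : Continuous z := by
    apply Continuous.add
    apply Continuous.add continuous_const
    · exact (Real.continuous_cos).smul continuous_const
    · exact (continuous_const.mul Real.continuous_sin).smul continuous_const
  -- the points stay on the sphere of radius s around β
  have hb2 : ∀ φ : ℝ, ‖Real.cos φ • u + (s * Real.sin φ) • w‖ ^ 2 = s ^ 2 := by
    intro φ
    rw [norm_add_sq_real, norm_smul, norm_smul, real_inner_smul_left, real_inner_smul_right,
      hwu]
    have h := Real.sin_sq_add_cos_sq φ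
    simp only [Real.norm_eq_abs, mul_zero]
    rw [mul_pow, mul_pow, sq_abs, sq_abs, hw1]
    linear_combination (s ^ 2) * h
  have hnormz : ∀ φ : ℝ, ‖β - z φ‖ = s := by
    intro φ
    have h1 : β - z φ = -(Real.cos φ • u + (s * Real.sin φ) • w) := by
      simp only [hz]; abel
    have h2 : ‖β - z φ‖ ^ 2 = s ^ 2 := by rw [h1, norm_neg]; exact hb2 φ
    rw [← Real.sqrt_sq (norm_nonneg (β - z φ)), h2, Real.sqrt_sq hspos.le]
  -- the distance to θ0 along the rotation
  set Q : ℝ → ℝ := fun φ => ‖v‖ ^ 2 + s ^ 2 - 2 * (Real.cos φ * cvu + s * Real.sin φ * cvw)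
    with hQ
  have hQz : ∀ φ : ℝ, ‖θ0 - z φ‖ ^ 2 = Q φ := by
    intro φ
    have h1 : θ0 - z φ = v - (Real.cos φ • u + (s * Real.sin φ) • w) := by
      simp only [hz, hv]; abel
    rw [h1, norm_sub_sq_real, hb2, inner_add_right, real_inner_smul_right,
      real_inner_smul_right, hQ]
    ring
  have hQc : Continuous Q := by
    apply Continuous.sub continuous_const
    exact continuous_const.mul (((Real.continuous_cos).mul continuous_const).add
      (((continuous_const.mul Real.continuous_sin)).mul continuous_const))
  have hQ0 : Q 0 = ‖θ0 - x‖ ^ 2 := by rw [← hQz 0, hz0]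
  -- radius within which the rotation stays in the ball
  obtain ⟨φ0, hφ0pos, hφ0⟩ : ∃ φ0 > 0, ∀ φ : ℝ, |φ| < φ0 → z φ ∈ ball c r := by
    have h1 : z ⁻¹' (ball c r) ∈ nhds (0 : ℝ) := by
      apply hzc.continuousAt.preimage_mem_nhds
      rw [hz0]; exact isOpen_ball.mem_nhds hx
    rw [Metric.mem_nhds_iff] at h1
    obtain ⟨ε, hε, hsub⟩ := h1
    exact ⟨ε, hε, fun φ hφ => hsub (by simpa [Real.norm_eq_abs] using hφ)⟩
  -- choice of the angle
  set φ1 : ℝ := min (φ0/2) (min 1 (s * cvw / (|cvu| + 1))) with hφ1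
  have hφ1pos : 0 < φ1 := by
    apply lt_min (by linarith)
    apply lt_min one_pos
    positivity
  have hφ1le1 : φ1 ≤ 1 := le_trans (min_le_right _ _) (min_le_left _ _)
  have hφ1lecw : φ1 ≤ s * cvw / (|cvu| + 1) := le_trans (min_le_right _ _) (min_le_right _ _)
  have hφ1ltφ0 : φ1 < φ0 := lt_of_le_of_lt (min_le_left _ _) (by linarith)
  have hsin : φ1 - φ1 ^ 3 / 4 < Real.sin φ1 := by
    have := Real.sin_gt_sub_cube hφ1pos; nlinarith [pow_pos hφ1pos 3]
  have hcos : 1 - Real.cos φ1 ≤ φ1 ^ 2 / 2 := aux_one_sub_cos_le φ1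
  have hcos1 : Real.cos φ1 ≤ 1 := Real.cos_le_one φ1
  have hcvu1 : cvu ≤ |cvu| := le_abs_self cvu
  have hcvu2 : -cvu ≤ |cvu| := neg_le_abs cvu
  have habs : 0 ≤ |cvu| := abs_nonneg cvu
  have hkey : |cvu| * φ1 < s * cvw := by
    have h2 : φ1 * (|cvu| + 1) ≤ s * cvw := (le_div_iff₀ (by positivity)).mp hφ1lecw
    nlinarith [h2, hφ1pos]
  have e2 : |cvu| * (φ1^2/2) < s * cvw * (φ1/2) := by
    have h := mul_lt_mul_of_pos_right hkey (by positivity : (0:ℝ) < φ1/2)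
    linarith [h]
  have hsin2 : φ1/2 < Real.sin φ1 := by
    nlinarith [hsin, hφ1pos, hφ1le1, mul_nonneg (mul_nonneg hφ1pos.le hφ1pos.le) hφ1pos.le]
  have e3 : s * cvw * (φ1/2) < s * Real.sin φ1 * cvw := by
    have h := mul_lt_mul_of_pos_left hsin2 (mul_pos hspos hwv)
    linarith [h]
  have hQlt : Q φ1 < Q 0 := by
    have e1 : cvu * (1 - Real.cos φ1) ≤ |cvu| * (φ1^2/2) := by
      nlinarith [habs, hcvu1, hcos, hcos1]
    simp only [hQ, Real.cos_zero, Real.sin_zero]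
    linarith [e1, e2, e3]
  have hQgt : Q 0 < Q (-φ1) := by
    have e1 : -cvu * (1 - Real.cos φ1) ≤ |cvu| * (φ1^2/2) := by
      nlinarith [habs, hcvu2, hcos, hcos1]
    simp only [hQ, Real.cos_zero, Real.sin_zero, Real.cos_neg, Real.sin_neg]
    linarith [e1, e2, e3]
  -- IVT : all values in [Q φ1, Q (-φ1)] are attained
  have hcover : ∀ T ∈ Icc (Q φ1) (Q (-φ1)), ∃ φ : ℝ, |φ| ≤ φ1 ∧ Q φ = T := by
    intro T hT
    rcases le_total T (Q 0) with h | h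
    · have h1 : T ∈ Icc (Q φ1) (Q 0) := ⟨hT.1, h⟩
      obtain ⟨φ, hφmem, hφval⟩ := intermediate_value_Icc' hφ1pos.le hQc.continuousOn h1
      exact ⟨φ, by rw [abs_le]; constructor <;> [linarith [hφmem.1]; exact hφmem.2], hφval⟩
    · have h1 : T ∈ Icc (Q 0) (Q (-φ1)) := ⟨h, hT.2⟩
      obtain ⟨φ, hφmem, hφval⟩ := intermediate_value_Icc'
        (show -φ1 ≤ 0 by linarith) hQc.continuousOn h1
      exact ⟨φ, by rw [abs_le]; constructor <;> [exact hφmem.1; linarith [hφmem.2]], hφval⟩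
  -- the value of η0 on this interval
  have hval : ∀ T ∈ Icc (Q φ1) (Q (-φ1)), η0 T = g (s ^ 2) := by
    intro T hT
    obtain ⟨φ, hφabs, hφval⟩ := hcover T hT
    have hzmem : z φ ∈ ball c r := hφ0 φ (lt_of_le_of_lt hφabs hφ1ltφ0)
    have h1 := heqB (z φ) hzmem
    rw [hQz φ, hφval, hnormz φ] at h1
    exact h1
  have hx0val : η0 (‖θ0 - x‖ ^ 2) = g (s ^ 2) := by
    have h1 := heqB x hx
    have h2 : ‖β - x‖ = s := by rw [hs, hu, norm_sub_rev]
    rw [h2] at h1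
    exact h1
  -- choose ε
  set q0 : ℝ := ‖θ0 - x‖ with hq0
  have hq0nonneg : 0 ≤ q0 := norm_nonneg _
  set a : ℝ := Q 0 - Q φ1 with ha
  set b : ℝ := Q (-φ1) - Q 0 with hb
  have hapos : 0 < a := by rw [ha]; linarith
  have hbpos : 0 < b := by rw [hb]; linarith
  refine ⟨min 1 (min a b / (2 * q0 + 2)), by positivity, ?_⟩
  intro t ht htclose
  have hmin1 : min 1 (min a b / (2 * q0 + 2)) ≤ 1 := min_le_left _ _
  have hmin2 : min 1 (min a b / (2 * q0 + 2)) ≤ min a b / (2 * q0 + 2) := min_le_right _ _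
  have habs2 := abs_lt.mp htclose
  have hQ0q : Q 0 = q0 ^ 2 := hQ0
  have hab1 : min a b ≤ a := min_le_left _ _
  have hab2 : min a b ≤ b := min_le_right _ _
  have hdiv : min a b / (2 * q0 + 2) * (2 * q0 + 2) = min a b := by
    field_simp
  have hstep1 : |t ^ 2 - q0 ^ 2| = |t - q0| * (t + q0) := by
    rw [show t ^ 2 - q0 ^ 2 = (t - q0) * (t + q0) by ring, abs_mul,
      abs_of_nonneg (by linarith : (0:ℝ) ≤ t + q0)]
  have hstep2 : |t - q0| * (t + q0) < min a b := by
    calc |t - q0| * (t + q0) ≤ |t - q0| * (2 * q0 + 2) := by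
          apply mul_le_mul_of_nonneg_left _ (abs_nonneg _)
          linarith [habs2.2, hmin1]
      _ < (min a b / (2 * q0 + 2)) * (2 * q0 + 2) := by
          apply mul_lt_mul_of_pos_right (lt_of_lt_of_le htclose hmin2)
          linarith
      _ = min a b := hdiv
  have hstep3 := abs_lt.mp (hstep1 ▸ hstep2)
  have htmem : t ^ 2 ∈ Icc (Q φ1) (Q (-φ1)) := by
    constructor
    · rw [show Q φ1 = Q 0 - a by rw [ha]; ring, hQ0q]
      linarith [hstep3.1, hab1]
    · rw [show Q (-φ1) = Q 0 + b by rw [hb]; ring, hQ0q]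
      linarith [hstep3.2, hab2]
  rw [hval (t ^ 2) htmem, hx0val]


set_option maxHeartbeats 1000000 in
lemma aux_stepB {d : ℕ} (hd : 2 ≤ d) (θ0 β c : EuclideanSpace ℝ (Fin d)) (r : ℝ)
    (hβ : β ≠ θ0) (x : EuclideanSpace ℝ (Fin d)) (hx : x ∈ ball c r) (hxθ : θ0 ≠ x) :
    ∃ x' ∈ ball c r, ‖θ0 - x'‖ = ‖θ0 - x‖ ∧ x' ≠ β ∧
      ∃ w, ‖w‖ = 1 ∧ ⟪x' - β, w⟫ = 0 ∧ 0 < ⟪θ0 - β, w⟫ := by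
  set v : EuclideanSpace ℝ (Fin d) := θ0 - β with hv
  have hvne : v ≠ 0 := sub_ne_zero.mpr (Ne.symm hβ)
  set t : ℝ := ‖θ0 - x‖ with ht
  have htpos : 0 < t := norm_pos_iff.mpr (sub_ne_zero.mpr hxθ)
  by_cases hgen : x ≠ β ∧ ∀ a : ℝ, v ≠ a • (x - β)
  · obtain ⟨w, hw1, hwu, hwv⟩ :=
      aux_goodify (x - β) v (sub_ne_zero.mpr hgen.1) hgen.2
    exact ⟨x, hx, rfl, hgen.1, w, hw1, hwu, hwv⟩
  · -- x lies on the line through β and θ0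
    push_neg at hgen
    have hμ : ∃ μ : ℝ, x - θ0 = μ • v := by
      rcases eq_or_ne x β with hxβ | hxβ
      · exact ⟨-1, by rw [hxβ, hv]; module⟩
      · obtain ⟨a, ha⟩ := hgen hxβ
        have hane : a ≠ 0 := by
          intro h; rw [h, zero_smul] at ha; exact hvne ha
        refine ⟨a⁻¹ - 1, ?_⟩
        have hxb : x - β = a⁻¹ • v := by
          rw [ha, smul_smul, inv_mul_cancel₀ hane, one_smul]
        have : x - θ0 = (x - β) - v := by rw [hv]; abel
        rw [this, hxb, sub_smul, one_smul]
    obtain ⟨μ, hμeq⟩ := hμ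
    have hμne : μ ≠ 0 := by
      intro h; rw [h, zero_smul, sub_eq_zero] at hμeq; exact hxθ hμeq.symm
    obtain ⟨w', hw'1, hw'v⟩ := aux_exists_orth hd v
    have hw'xθ : ⟪x - θ0, w'⟫ = 0 := by
      rw [hμeq, real_inner_smul_left, hw'v, mul_zero]
    -- rotate x around θ0 towards w'
    set z : ℝ → EuclideanSpace ℝ (Fin d) :=
      fun ψ => θ0 + Real.cos ψ • (x - θ0) + (t * Real.sin ψ) • w' with hz
    have hz0 : z 0 = x := by
      simp only [hz, Real.cos_zero, Real.sin_zero, one_smul, mul_zero, zero_smul, add_zero]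
      abel
    have hzc : Continuous z := by
      apply Continuous.add
      apply Continuous.add continuous_const
      · exact (Real.continuous_cos).smul continuous_const
      · exact (continuous_const.mul Real.continuous_sin).smul continuous_const
    obtain ⟨ψ0, hψ0pos, hψ0⟩ : ∃ ψ0 > 0, ∀ ψ : ℝ, |ψ| < ψ0 → z ψ ∈ ball c r := by
      have h1 : z ⁻¹' (ball c r) ∈ nhds (0 : ℝ) := by
        apply hzc.continuousAt.preimage_mem_nhds
        rw [hz0]; exact isOpen_ball.mem_nhds hx
      rw [Metric.mem_nhds_iff] at h1
      obtain ⟨ε, hε, hsub⟩ := h1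
      exact ⟨ε, hε, fun ψ hψ => hsub (by simpa [Real.norm_eq_abs] using hψ)⟩
    set ψ : ℝ := min (ψ0/2) 1 with hψdef
    have hψpos : 0 < ψ := lt_min (by linarith) one_pos
    have hψball : z ψ ∈ ball c r := by
      apply hψ0
      rw [abs_of_pos hψpos]
      exact lt_of_le_of_lt (min_le_left _ _) (by linarith)
    have hsinψ : 0 < Real.sin ψ := by
      apply Real.sin_pos_of_pos_of_lt_pi hψpos
      calc ψ ≤ 1 := min_le_right _ _
        _ < Real.pi := by linarith [Real.pi_gt_three]
    -- the rotated point is at the same distance from θ0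
    have hxt : ‖x - θ0‖ = t := by rw [ht, norm_sub_rev]
    have hnorm2 : ‖θ0 - z ψ‖ ^ 2 = t ^ 2 := by
      have h1 : θ0 - z ψ = -(Real.cos ψ • (x - θ0) + (t * Real.sin ψ) • w') := by
        simp only [hz]; abel
      rw [h1, norm_neg, norm_add_sq_real, norm_smul, norm_smul, real_inner_smul_left,
        real_inner_smul_right, hw'xθ]
      have h := Real.sin_sq_add_cos_sq ψ
      simp only [Real.norm_eq_abs, mul_zero]
      rw [mul_pow, mul_pow, sq_abs, sq_abs, hw'1, hxt]
      linear_combination (t ^ 2) * h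
    have hnorm : ‖θ0 - z ψ‖ = t := by
      rw [← Real.sqrt_sq (norm_nonneg (θ0 - z ψ)), hnorm2, Real.sqrt_sq htpos.le]
    -- the rotated point is "good"
    have hu'w' : ⟪z ψ - β, w'⟫ = t * Real.sin ψ := by
      have h1 : z ψ - β = v + Real.cos ψ • (x - θ0) + (t * Real.sin ψ) • w' := by
        simp only [hz, hv]; abel
      rw [h1, inner_add_left, inner_add_left, real_inner_smul_left, real_inner_smul_left,
        hw'xθ]
      rw [real_inner_comm] at hw'v ⊢
      rw [hw'v, real_inner_self_eq_norm_sq, hw'1]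
      ring
    have htsψ : 0 < t * Real.sin ψ := mul_pos htpos hsinψ
    have hu'ne : z ψ - β ≠ 0 := by
      intro h
      rw [h, inner_zero_left] at hu'w'
      linarith
    have hind : ∀ a : ℝ, v ≠ a • (z ψ - β) := by
      intro a ha
      have h1 : ⟪v, w'⟫ = a * (t * Real.sin ψ) := by
        rw [ha, real_inner_smul_left, hu'w']
      rw [hw'v] at h1
      have ha0 : a = 0 := by
        rcases mul_eq_zero.mp h1.symm with h | h
        · exact h
        · linarith
      rw [ha0, zero_smul] at ha
      exact hvne ha
    obtain ⟨w, hw1, hwu, hwv⟩ := aux_goodify (z ψ - β) v hu'ne hind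
    refine ⟨z ψ, hψball, hnorm, fun h => hu'ne (by rw [h]; simp), w, hw1, hwu, hwv⟩


set_option maxHeartbeats 1000000 in
/-- **Identifiability of the location and attenuation function (Lemma 2.1).**
Under assumption (A1) with `d ≥ 2`, if `η0` is continuous, nonincreasing and nonnegative on
`[0,∞)`, the map `x ↦ η0 |θ0 - x|²` is nonconstant on some open ball contained in `χ`, and
`g : [0,∞) → [0,∞)`, `β ∈ ℝ^d` satisfy `η0 |θ0 - x|² = g |β - x|²` for every `x ∈ χ`,
then `β = θ0` and `g = η0` on `{|θ0 - x|² : x ∈ χ}`. -/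
theorem identifiability_of_location_and_attenuation
    {d : ℕ} (hd : 2 ≤ d)
    (χ Θ : Set (EuclideanSpace ℝ (Fin d)))
    (μX : Measure (EuclideanSpace ℝ (Fin d))) [IsProbabilityMeasure μX]
    (T : ℝ)
    -- (A1)
    (hχbd : Bornology.IsBounded χ) (hχconv : Convex ℝ χ)
    (hχint : (interior χ).Nonempty)
    (hμsupp : μX χᶜ = 0)
    (Cdens : ℝ) (hdens : ∀ s, μX s ≤ ENNReal.ofReal Cdens * volume s)
    (hΘbd : Bornology.IsBounded Θ) (hΘint : (interior Θ).Nonempty)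
    (θ0 : EuclideanSpace ℝ (Fin d)) (hθ0 : θ0 ∈ interior Θ)
    (hχT : ∀ x ∈ χ, ‖x‖ ≤ T) (hΘT : ∀ θ ∈ Θ, ‖θ‖ ≤ T)
    -- attenuation function
    (η0 : ℝ → ℝ)
    (hη0cont : ContinuousOn η0 (Ici 0))
    (hη0anti : AntitoneOn η0 (Ici 0))
    (hη0nonneg : ∀ t ∈ Ici (0 : ℝ), 0 ≤ η0 t)
    -- nonconstancy on an open ball contained in χ
    (hnc : ∃ (c : EuclideanSpace ℝ (Fin d)) (r : ℝ), 0 < r ∧ ball c r ⊆ χ ∧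
      ∃ x ∈ ball c r, ∃ y ∈ ball c r, η0 (‖θ0 - x‖ ^ 2) ≠ η0 (‖θ0 - y‖ ^ 2))
    -- the competing parametrization
    (g : ℝ → ℝ) (hgnonneg : ∀ t ∈ Ici (0 : ℝ), 0 ≤ g t)
    (β : EuclideanSpace ℝ (Fin d))
    (heq : ∀ x ∈ χ, η0 (‖θ0 - x‖ ^ 2) = g (‖β - x‖ ^ 2)) :
    β = θ0 ∧ ∀ x ∈ χ, g (‖θ0 - x‖ ^ 2) = η0 (‖θ0 - x‖ ^ 2) := by
  obtain ⟨c, r, hr, hball, x₁, hx₁, x₂, hx₂, hne⟩ := hnc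
  have heqB : ∀ y ∈ ball c r, η0 (‖θ0 - y‖ ^ 2) = g (‖β - y‖ ^ 2) :=
    fun y hy => heq y (hball hy)
  have hβθ : β = θ0 := by
    by_contra hβ
    set K : Set ℝ := (fun y => ‖θ0 - y‖) '' ball c r with hK
    have hKpre : IsPreconnected K := by
      apply ((convex_ball c r).isPreconnected).image
      exact (continuous_const.sub continuous_id).norm.continuousOn
    have hKnonneg : ∀ t ∈ K, (0:ℝ) ≤ t := by
      rintro t ⟨y, _, rfl⟩; exact norm_nonneg _
    have hK'pre : IsPreconnected (K ∩ Ioi 0) :=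
      (hKpre.ordConnected.inter ordConnected_Ioi).isPreconnected
    -- local constancy of η0 ∘ sq on positive attained radii
    have hloc : ∀ t ∈ K ∩ Ioi (0:ℝ), ∃ ε > 0, ∀ t' : ℝ, 0 ≤ t' → |t' - t| < ε →
        η0 (t' ^ 2) = η0 (t ^ 2) := by
      rintro t ⟨⟨x, hxB, rfl⟩, htpos⟩
      have htpos' : (0:ℝ) < ‖θ0 - x‖ := htpos
      have hxθ : θ0 ≠ x := sub_ne_zero.mp (norm_pos_iff.mp htpos')
      obtain ⟨x', hx'B, hx'n, hx'β, w, hw1, hwu, hwv⟩ :=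
        aux_stepB hd θ0 β c r hβ x hxB hxθ
      have h := aux_stepA η0 g θ0 β c r heqB x' hx'B hx'β w hw1 hwu hwv
      rw [hx'n] at h
      exact h
    -- global constancy on positive radii, by connectedness
    have hconst : ∀ t1 ∈ K ∩ Ioi (0:ℝ), ∀ t2 ∈ K ∩ Ioi (0:ℝ),
        η0 (t1 ^ 2) = η0 (t2 ^ 2) := by
      intro t1 h1 t2 h2
      by_contra hne2
      choose! ε hεpos hεconst using hloc
      set U : Set ℝ := ⋃ t ∈ {s | s ∈ K ∩ Ioi (0:ℝ) ∧ η0 (s^2) = η0 (t1^2)},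
        Ioo (t - ε t) (t + ε t) with hU
      set V : Set ℝ := ⋃ t ∈ {s | s ∈ K ∩ Ioi (0:ℝ) ∧ η0 (s^2) ≠ η0 (t1^2)},
        Ioo (t - ε t) (t + ε t) with hV
      have hUopen : IsOpen U := isOpen_biUnion fun _ _ => isOpen_Ioo
      have hVopen : IsOpen V := isOpen_biUnion fun _ _ => isOpen_Ioo
      have hcov : K ∩ Ioi (0:ℝ) ⊆ U ∪ V := by
        intro t htm
        have hself : t ∈ Ioo (t - ε t) (t + ε t) := by
          constructor <;> [linarith [hεpos t htm]; linarith [hεpos t htm]]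
        by_cases hc : η0 (t^2) = η0 (t1^2)
        · exact Or.inl (mem_biUnion ⟨htm, hc⟩ hself)
        · exact Or.inr (mem_biUnion ⟨htm, hc⟩ hself)
      have hUne : ((K ∩ Ioi (0:ℝ)) ∩ U).Nonempty := by
        refine ⟨t1, h1, mem_biUnion ⟨h1, rfl⟩ ?_⟩
        constructor <;> [linarith [hεpos t1 h1]; linarith [hεpos t1 h1]]
      have hVne : ((K ∩ Ioi (0:ℝ)) ∩ V).Nonempty := by
        refine ⟨t2, h2, mem_biUnion ⟨h2, hne2 ∘ Eq.symm⟩ ?_⟩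
        constructor <;> [linarith [hεpos t2 h2]; linarith [hεpos t2 h2]]
      obtain ⟨t, htK, htU, htV⟩ := hK'pre U V hUopen hVopen hcov hUne hVne
      have htnn : (0:ℝ) ≤ t := hKnonneg t htK.1
      obtain ⟨ta, hta, htIa⟩ := mem_iUnion₂.mp htU
      obtain ⟨tb, htb, htIb⟩ := mem_iUnion₂.mp htV
      have hva : η0 (t^2) = η0 (ta^2) :=
        hεconst ta hta.1 t htnn (abs_lt.mpr ⟨by linarith [htIa.1], by linarith [htIa.2]⟩)
      have hvb : η0 (t^2) = η0 (tb^2) :=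
        hεconst tb htb.1 t htnn (abs_lt.mpr ⟨by linarith [htIb.1], by linarith [htIb.2]⟩)
      exact htb.2 (hvb.symm.trans (hva.trans hta.2))
    -- handle the center θ0 (zero radius) by continuity
    have hzero : θ0 ∈ ball c r → ∀ t2 ∈ K ∩ Ioi (0:ℝ), η0 0 = η0 (t2 ^ 2) := by
      intro hθball t2 ht2
      have hdist : dist θ0 c < r := mem_ball.mp hθball
      set ρ0 : ℝ := (r - dist θ0 c) / 2 with hρ0def
      have hρ0pos : 0 < ρ0 := by
        have := dist_nonneg (x := θ0) (y := c); simp only [hρ0def]; linarith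
      obtain ⟨e, he1, _⟩ := aux_exists_orth hd (θ0 - β)
      have hρK : ∀ ρ : ℝ, 0 < ρ → ρ ≤ ρ0 → ρ ∈ K ∩ Ioi (0:ℝ) := by
        intro ρ hρpos hρle
        refine ⟨⟨θ0 + ρ • e, ?_, ?_⟩, hρpos⟩
        · rw [mem_ball]
          calc dist (θ0 + ρ • e) c ≤ dist (θ0 + ρ • e) θ0 + dist θ0 c := dist_triangle _ _ _
            _ = ρ + dist θ0 c := by
                rw [dist_eq_norm, add_sub_cancel_left, norm_smul, Real.norm_eq_abs,
                  abs_of_pos hρpos, he1, mul_one]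
            _ < r := by simp only [hρ0def] at hρle; linarith
        · show ‖θ0 - (θ0 + ρ • e)‖ = ρ
          rw [sub_add_eq_sub_sub, sub_self, zero_sub, norm_neg, norm_smul,
            Real.norm_eq_abs, abs_of_pos hρpos, he1, mul_one]
      -- η0 is constant, equal to η0 (t2^2), on (0, ρ0^2]
      have hconst2 : ∀ sq ∈ Ioc (0:ℝ) (ρ0^2), η0 sq = η0 (t2^2) := by
        intro sq hsq
        have hρpos : 0 < Real.sqrt sq := Real.sqrt_pos.mpr hsq.1
        have hρle : Real.sqrt sq ≤ ρ0 := by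
          rw [show ρ0 = Real.sqrt (ρ0^2) by rw [Real.sqrt_sq hρ0pos.le]]
          exact Real.sqrt_le_sqrt hsq.2
        have h := hconst (Real.sqrt sq) (hρK _ hρpos hρle) t2 ht2
        rwa [Real.sq_sqrt hsq.1.le] at h
      -- take the limit as sq → 0⁺
      have hcw : Tendsto η0 (nhdsWithin 0 (Ioi 0)) (nhds (η0 0)) := by
        have h := (hη0cont 0 (self_mem_Ici)).tendsto
        exact h.mono_left (nhdsWithin_mono 0 (fun y hy => mem_Ici.mpr (le_of_lt (mem_Ioi.mp hy))))
      have heqev : η0 =ᶠ[nhdsWithin 0 (Ioi 0)] (fun _ => η0 (t2^2)) := by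
        filter_upwards [Ioc_mem_nhdsGT_of_mem
          (⟨le_refl 0, by positivity⟩ : (0:ℝ) ∈ Ico 0 (ρ0^2))] with sq hsq
        exact hconst2 sq hsq
      have h2 : Tendsto (fun _ : ℝ => η0 (t2^2)) (nhdsWithin 0 (Ioi 0)) (nhds (η0 0)) :=
        hcw.congr' heqev
      exact tendsto_nhds_unique h2 tendsto_const_nhds
    -- conclude constancy on the whole ball
    have key : ∀ y1 ∈ ball c r, ∀ y2 ∈ ball c r,
        η0 (‖θ0 - y1‖ ^ 2) = η0 (‖θ0 - y2‖ ^ 2) := by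
      intro y1 h1 y2 h2
      rcases eq_or_ne θ0 y1 with hz1 | hz1 <;> rcases eq_or_ne θ0 y2 with hz2 | hz2
      · rw [← hz1, ← hz2]
      · have hm2 : ‖θ0 - y2‖ ∈ K ∩ Ioi (0:ℝ) :=
          ⟨⟨y2, h2, rfl⟩, norm_pos_iff.mpr (sub_ne_zero.mpr hz2)⟩
        rw [← hz1, sub_self, norm_zero]
        rw [show (0:ℝ)^2 = 0 by ring]
        exact hzero (hz1 ▸ h1) _ hm2
      · have hm1 : ‖θ0 - y1‖ ∈ K ∩ Ioi (0:ℝ) :=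
          ⟨⟨y1, h1, rfl⟩, norm_pos_iff.mpr (sub_ne_zero.mpr hz1)⟩
        rw [← hz2, sub_self, norm_zero]
        rw [show (0:ℝ)^2 = 0 by ring]
        exact (hzero (hz2 ▸ h2) _ hm1).symm
      · exact hconst _ ⟨⟨y1, h1, rfl⟩, norm_pos_iff.mpr (sub_ne_zero.mpr hz1)⟩
          _ ⟨⟨y2, h2, rfl⟩, norm_pos_iff.mpr (sub_ne_zero.mpr hz2)⟩
    exact hne (key x₁ hx₁ x₂ hx₂)
  refine ⟨hβθ, fun x hx => ?_⟩
  have h := heq x hx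
  rw [hβθ] at h
  exact h.symm
end

section
/- Let d ≥ 2, let B ⊆ ℝ^d be a nonempty open connected set, let θ0, β ∈ ℝ^d and r, s > 0. If the closed balls satisfy ∅ ≠ {x : |x − θ0| ≤ r} ∩ B = {x : |x − β| ≤ s} ∩ B and this common intersection is a proper subset of B, then θ0 = β and r = s. (Geometric lemma underlying the identifiability proof: a nonempty proper trace of a closed ball on an open connected set determines the ball.) -/
open Set Metric Module
open scoped RealInnerProductSpace

section Aux

variable {d : ℕ}

local notation "E" => EuclideanSpace ℝ (Fin d)

/-- Expansion of the squared norm of `c + r • e` for a unit vector `e`. -/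
private lemma aux_norm_expand (c e : E) (r : ℝ) (he : ‖e‖ = 1) :
    ‖c + r • e‖ ^ 2 = ‖c‖ ^ 2 + 2 * r * ⟪c, e⟫ + r ^ 2 := by
  have h := norm_add_sq_real c (r • e)
  rw [real_inner_smul_right, norm_smul, he, mul_one, Real.norm_eq_abs, sq_abs] at h
  rw [h]; ring

/-- In dimension at least 2, every unit vector admits a unit orthogonal vector. -/
private lemma aux_exists_orth_s1 (hd : 2 ≤ d) (e0 : E) (he0 : ‖e0‖ = 1) :
    ∃ w : E, ‖w‖ = 1 ∧ ⟪e0, w⟫ = 0 := by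
  have he0ne : e0 ≠ 0 := by intro h; rw [h, norm_zero] at he0; norm_num at he0
  have hspan : finrank ℝ (ℝ ∙ e0 : Submodule ℝ E) = 1 := finrank_span_singleton he0ne
  have hne : (ℝ ∙ e0 : Submodule ℝ E)ᗮ ≠ ⊥ := by
    intro hbot
    have htop : (ℝ ∙ e0 : Submodule ℝ E) = ⊤ :=
      Submodule.orthogonal_eq_bot_iff.mp hbot
    have h1 : finrank ℝ (EuclideanSpace ℝ (Fin d)) = 1 := by
      rw [← finrank_top ℝ (EuclideanSpace ℝ (Fin d)), ← htop, hspan]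
    rw [finrank_euclideanSpace_fin] at h1
    omega
  obtain ⟨v, hv_mem, hv_ne⟩ := Submodule.exists_mem_ne_zero_of_ne_bot hne
  refine ⟨‖v‖⁻¹ • v, ?_, ?_⟩
  · rw [norm_smul, norm_inv, norm_norm, inv_mul_cancel₀ (norm_ne_zero_iff.mpr hv_ne)]
  · rw [real_inner_smul_right]
    have h2 := (Submodule.mem_orthogonal _ v).mp hv_mem e0 (Submodule.mem_span_singleton_self e0)
    rw [h2, mul_zero]

end Aux

set_option maxHeartbeats 2000000 in
/-- **Geometric lemma underlying the identifiability proof.**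
Let `d ≥ 2` and let `B ⊆ ℝ^d` be a nonempty open connected set. If the traces on `B` of the
closed balls `closedBall θ0 r` and `closedBall β s` coincide, are nonempty, and form a proper
subset of `B`, then `θ0 = β` and `r = s`. -/
theorem closedBall_trace_determines_ball
    {d : ℕ} (hd : 2 ≤ d)
    (B : Set (EuclideanSpace ℝ (Fin d)))
    (hBopen : IsOpen B) (hBconn : IsConnected B)
    (θ0 β : EuclideanSpace ℝ (Fin d)) (r s : ℝ)
    (hr : 0 < r) (hs : 0 < s)
    (hne : (closedBall θ0 r ∩ B).Nonempty)
    (heq : closedBall θ0 r ∩ B = closedBall β s ∩ B)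
    (hproper : closedBall θ0 r ∩ B ⊂ B) :
    θ0 = β ∧ r = s := by
  -- Step 1: there is a point of `B` on the sphere of radius `r` around `θ0`
  obtain ⟨x, hxB, hxr⟩ : ∃ x ∈ B, dist x θ0 = r := by
    by_contra h
    push_neg at h
    have hsub : B ⊆ ball θ0 r ∪ (closedBall θ0 r)ᶜ := by
      intro y hy
      rcases lt_trichotomy (dist y θ0) r with hlt | heq' | hgt
      · exact Or.inl (mem_ball.mpr hlt)
      · exact absurd heq' (h y hy)
      · exact Or.inr fun hc => absurd (mem_closedBall.mp hc) (not_le.mpr hgt)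
    obtain ⟨p, hpB, hpN⟩ := exists_of_ssubset hproper
    have hpN' : p ∉ closedBall θ0 r := fun hc => hpN ⟨hc, hpB⟩
    obtain ⟨q, hqC, hqB⟩ := hne
    have hqball : q ∈ ball θ0 r := by
      rcases lt_or_eq_of_le (mem_closedBall.mp hqC) with hlt | heq'
      · exact mem_ball.mpr hlt
      · exact absurd heq' (h q hqB)
    have hcc := hBconn.isPreconnected _ _ isOpen_ball
      (isOpen_compl_iff.mpr isClosed_closedBall) hsub ⟨q, hqB, hqball⟩ ⟨p, hpB, hpN'⟩
    obtain ⟨z, _, hz1, hz2⟩ := hcc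
    exact hz2 (ball_subset_closedBall hz1)
  -- Step 2: open neighborhood of `x` inside `B`
  obtain ⟨ε, hε, hball⟩ := Metric.isOpen_iff.mp hBopen x hxB
  -- Step 3: key local fact: unit directions near `x` land on the sphere of `β`
  have key : ∀ e : EuclideanSpace ℝ (Fin d), ‖e‖ = 1 →
      ‖θ0 + r • e - x‖ < ε → ‖θ0 + r • e - β‖ = s := by
    intro e he hclose
    obtain ⟨y, hydef⟩ : ∃ y, y = θ0 + r • e := ⟨_, rfl⟩
    rw [← hydef] at hclose ⊢
    have hyB : y ∈ B := hball (mem_ball.mpr (by rw [dist_eq_norm]; exact hclose))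
    have hyθ : dist y θ0 = r := by
      rw [dist_eq_norm, hydef, add_sub_cancel_left, norm_smul, he, mul_one,
        Real.norm_eq_abs, abs_of_pos hr]
    have hyC : y ∈ closedBall β s ∩ B := heq ▸ ⟨mem_closedBall.mpr hyθ.le, hyB⟩
    have hle : ‖y - β‖ ≤ s := by
      have h1 := mem_closedBall.mp hyC.1
      rwa [dist_eq_norm] at h1
    refine le_antisymm hle ?_
    by_contra hlt
    push_neg at hlt
    obtain ⟨δ, hδdef⟩ : ∃ δ, δ = min ((ε - ‖y - x‖) / 2) ((s - ‖y - β‖) / 2) := ⟨_, rfl⟩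
    have hεy : ‖y - x‖ < ε := hclose
    have hδ1 : δ ≤ (ε - ‖y - x‖) / 2 := hδdef ▸ min_le_left _ _
    have hδ2 : δ ≤ (s - ‖y - β‖) / 2 := hδdef ▸ min_le_right _ _
    have hδpos : 0 < δ := hδdef ▸ lt_min (by linarith) (by linarith)
    obtain ⟨y', hy'def⟩ : ∃ y', y' = θ0 + (r + δ) • e := ⟨_, rfl⟩
    have hy'y : y' - y = δ • e := by rw [hy'def, hydef, add_smul]; abel
    have hy'B : y' ∈ B := by
      apply hball
      rw [mem_ball, dist_eq_norm]
      have h2 : y' - x = (y' - y) + (y - x) := by abel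
      rw [h2, hy'y]
      calc ‖δ • e + (y - x)‖ ≤ ‖δ • e‖ + ‖y - x‖ := norm_add_le _ _
        _ = δ + ‖y - x‖ := by rw [norm_smul, he, mul_one, Real.norm_eq_abs, abs_of_pos hδpos]
        _ < ε := by linarith
    have hy's : y' ∈ closedBall β s := by
      rw [mem_closedBall, dist_eq_norm]
      have h2 : y' - β = (y' - y) + (y - β) := by abel
      rw [h2, hy'y]
      calc ‖δ • e + (y - β)‖ ≤ ‖δ • e‖ + ‖y - β‖ := norm_add_le _ _
        _ = δ + ‖y - β‖ := by rw [norm_smul, he, mul_one, Real.norm_eq_abs, abs_of_pos hδpos]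
        _ ≤ s := by linarith
    have hmem : y' ∈ closedBall θ0 r ∩ B := heq ▸ ⟨hy's, hy'B⟩
    have hcon : dist y' θ0 ≤ r := mem_closedBall.mp hmem.1
    rw [dist_eq_norm, hy'def, add_sub_cancel_left, norm_smul, he, mul_one, Real.norm_eq_abs,
      abs_of_pos (by linarith : (0:ℝ) < r + δ)] at hcon
    linarith
  -- the canonical unit direction at `x`
  obtain ⟨e0, he0def⟩ : ∃ e0 : EuclideanSpace ℝ (Fin d), e0 = r⁻¹ • (x - θ0) := ⟨_, rfl⟩
  have hxθ : ‖x - θ0‖ = r := by rw [← dist_eq_norm]; exact hxr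
  have he0 : ‖e0‖ = 1 := by
    rw [he0def, norm_smul, norm_inv, Real.norm_eq_abs, abs_of_pos hr, hxθ,
      inv_mul_cancel₀ hr.ne']
  have hx0 : θ0 + r • e0 = x := by
    rw [he0def, smul_smul, mul_inv_cancel₀ hr.ne', one_smul]
    abel
  obtain ⟨c, hc⟩ : ∃ c : EuclideanSpace ℝ (Fin d), c = θ0 - β := ⟨_, rfl⟩
  -- equation satisfied by admissible directions
  have eqn : ∀ e : EuclideanSpace ℝ (Fin d), ‖e‖ = 1 →
      ‖θ0 + r • e - x‖ < ε → ‖c‖ ^ 2 + 2 * r * ⟪c, e⟫ + r ^ 2 = s ^ 2 := by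
    intro e he hclose
    have h1 := key e he hclose
    have h2 : θ0 + r • e - β = c + r • e := by rw [hc]; abel
    have h3 := aux_norm_expand c e r he
    rw [← h3, ← h2, h1]
  have eq0 : ‖c‖ ^ 2 + 2 * r * ⟪c, e0⟫ + r ^ 2 = s ^ 2 := by
    apply eqn e0 he0
    rw [hx0]
    simpa using hε
  -- the rotation parameter
  obtain ⟨t, htdef⟩ : ∃ t : ℝ, t = min (ε / (4 * r)) 1 := ⟨_, rfl⟩
  have htpos : 0 < t := htdef ▸ lt_min (by positivity) one_pos
  have ht1 : t ≤ 1 := htdef ▸ min_le_right _ _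
  have htε : t ≤ ε / (4 * r) := htdef ▸ min_le_left _ _
  have hsin_pos : 0 < Real.sin t :=
    Real.sin_pos_of_pos_of_lt_pi htpos (lt_of_le_of_lt ht1 (by linarith [Real.pi_gt_three]))
  have hsin_le : Real.sin t ≤ t := Real.sin_le htpos.le
  have hcos_lt : Real.cos t < 1 := by
    nlinarith [Real.sin_sq_add_cos_sq t, Real.cos_le_one t, Real.neg_one_le_cos t]
  have hcos_ge : 1 - t ≤ Real.cos t := by
    have h1 := Real.one_sub_sq_div_two_le_cos (x := t)
    nlinarith
  -- rotated directions satisfy the equation too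
  have rot : ∀ w : EuclideanSpace ℝ (Fin d), ‖w‖ = 1 → ⟪e0, w⟫ = 0 →
      ‖c‖ ^ 2 + 2 * r * (Real.cos t * ⟪c, e0⟫ + Real.sin t * ⟪c, w⟫) + r ^ 2 = s ^ 2 := by
    intro w hw how
    obtain ⟨e, hedef⟩ : ∃ e : EuclideanSpace ℝ (Fin d),
        e = Real.cos t • e0 + Real.sin t • w := ⟨_, rfl⟩
    have heu : ‖e‖ = 1 := by
      have hsq : ‖e‖ ^ 2 = 1 := by
        rw [hedef, norm_add_sq_real, real_inner_smul_left, real_inner_smul_right, how,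
          norm_smul, norm_smul, he0, hw, mul_one, mul_one, Real.norm_eq_abs, Real.norm_eq_abs,
          sq_abs, sq_abs]
        have := Real.sin_sq_add_cos_sq t
        linarith
      nlinarith [norm_nonneg e]
    have hclose : ‖θ0 + r • e - x‖ < ε := by
      have hdiff : θ0 + r • e - x = r • ((Real.cos t - 1) • e0 + Real.sin t • w) := by
        rw [← hx0, hedef]
        module
      rw [hdiff, norm_smul, Real.norm_eq_abs, abs_of_pos hr]
      have hb : ‖(Real.cos t - 1) • e0 + Real.sin t • w‖ ≤ (1 - Real.cos t) + Real.sin t := by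
        calc ‖(Real.cos t - 1) • e0 + Real.sin t • w‖
            ≤ ‖(Real.cos t - 1) • e0‖ + ‖Real.sin t • w‖ := norm_add_le _ _
          _ = |Real.cos t - 1| + |Real.sin t| := by
              rw [norm_smul, norm_smul, he0, hw, mul_one, mul_one, Real.norm_eq_abs,
                Real.norm_eq_abs]
          _ = (1 - Real.cos t) + Real.sin t := by
              rw [abs_of_nonpos (by linarith), abs_of_pos hsin_pos]; ring
      have h2t : (1 - Real.cos t) + Real.sin t ≤ 2 * t := by linarith
      have hrt : r * t ≤ ε / 4 := by
        have h4 : 0 < 4 * r := by linarith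
        calc r * t ≤ r * (ε / (4 * r)) := by
              exact mul_le_mul_of_nonneg_left htε hr.le
          _ = ε / 4 := by field_simp
      calc r * ‖(Real.cos t - 1) • e0 + Real.sin t • w‖ ≤ r * (2 * t) := by
            apply mul_le_mul_of_nonneg_left _ hr.le
            linarith
        _ = 2 * (r * t) := by ring
        _ ≤ 2 * (ε / 4) := by linarith
        _ < ε := by linarith
    have hE := eqn e heu hclose
    rwa [hedef, inner_add_right, real_inner_smul_right, real_inner_smul_right] at hE
  -- existence of one orthogonal unit vector gives `⟪c, e0⟫ = 0`
  obtain ⟨w0, hw0, how0⟩ := aux_exists_orth_s1 hd e0 he0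
  have hw0' : ‖-w0‖ = 1 := by rwa [norm_neg]
  have how0' : ⟪e0, -w0⟫ = 0 := by rw [inner_neg_right, how0, neg_zero]
  have E1 := rot w0 hw0 how0
  have E2 := rot (-w0) hw0' how0'
  rw [inner_neg_right] at E2
  have ha : ⟪c, e0⟫ = 0 := by
    have h12 : (Real.cos t - 1) * ⟪c, e0⟫ = 0 := by nlinarith [E1, E2, eq0]
    rcases mul_eq_zero.mp h12 with h | h
    · linarith
    · exact h
  -- every orthogonal unit vector is orthogonal to `c`
  have hortho : ∀ w : EuclideanSpace ℝ (Fin d), ‖w‖ = 1 → ⟪e0, w⟫ = 0 → ⟪c, w⟫ = 0 := by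
    intro w hw how
    have F1 := rot w hw how
    have F2 := rot (-w) (by rwa [norm_neg]) (by rw [inner_neg_right, how, neg_zero])
    rw [inner_neg_right] at F2
    have h1 : Real.sin t * ⟪c, w⟫ = 0 := by nlinarith [F1, F2]
    rcases mul_eq_zero.mp h1 with h | h
    · exact absurd h hsin_pos.ne'
    · exact h
  -- conclude c = 0
  have hczero : c = 0 := by
    by_contra hcne
    have hcnorm : ‖c‖ ≠ 0 := norm_ne_zero_iff.mpr hcne
    obtain ⟨w, hwdef⟩ : ∃ w : EuclideanSpace ℝ (Fin d), w = ‖c‖⁻¹ • c := ⟨_, rfl⟩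
    have hw : ‖w‖ = 1 := by
      rw [hwdef, norm_smul, norm_inv, norm_norm, inv_mul_cancel₀ hcnorm]
    have how : ⟪e0, w⟫ = 0 := by
      rw [hwdef, real_inner_smul_right, real_inner_comm, ha, mul_zero]
    have h1 := hortho w hw how
    rw [hwdef, real_inner_smul_right, real_inner_self_eq_norm_sq] at h1
    rcases mul_eq_zero.mp h1 with h | h
    · exact (hcnorm (inv_eq_zero.mp h)).elim
    · exact hcnorm (by nlinarith [norm_nonneg c])
  have hθβ : θ0 = β := sub_eq_zero.mp (hc ▸ hczero)
  refine ⟨hθβ, ?_⟩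
  rw [hczero] at eq0
  simp at eq0
  nlinarith
end

section
/- Suppose assumptions (A1)–(A3) hold, and let (X_1, Y_1), …, (X_n, Y_n) be i.i.d. from the model. For each θ ∈ Θ let η̃_θ be any minimizer of Q_n(·, θ) over M, extended to [0,4T²] as a right-continuous piecewise constant function with jumps only at the points |θ − X_i|². Then sup_{θ∈Θ} ‖η̃_θ‖_∞ = O_p(n^{1/q}); that is, for every δ > 0 there exists C < ∞ such that P(sup_{θ∈Θ} sup_{t∈[0,4T²]} |η̃_θ(t)| > C n^{1/q}) ≤ δ for all sufficiently large n. (Theorem 3.1, first assertion.) -/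
open MeasureTheory ProbabilityTheory Set Metric

set_option maxHeartbeats 1600000 in
/-- **Theorem 3.1, first assertion.** Under (A1)–(A3), the profile least squares estimator
`η̃_θ` (a minimizer of `Q_n(·, θ)` over the class `M` of nonincreasing nonnegative functions
on `[0, 4T²]`, taking values among its fitted values at the data points) satisfies
`sup_{θ∈Θ} ‖η̃_θ‖_∞ = O_p(n^{1/q})`. -/
theorem sup_profile_lse_Op
    {d : ℕ} {Ω : Type*} [MeasurableSpace Ω] (μ : Measure Ω) [IsProbabilityMeasure μ]
    (χ Θ : Set (EuclideanSpace ℝ (Fin d))) (T : ℝ)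
    (θ0 : EuclideanSpace ℝ (Fin d))
    -- (A1)
    (hχbd : Bornology.IsBounded χ) (hχconv : Convex ℝ χ)
    (hχint : (interior χ).Nonempty)
    (hΘbd : Bornology.IsBounded Θ) (hΘint : (interior Θ).Nonempty)
    (hθ0 : θ0 ∈ interior Θ)
    (hχT : ∀ x ∈ χ, ‖x‖ ≤ T) (hΘT : ∀ θ ∈ Θ, ‖θ‖ ≤ T)
    (X : ℕ → Ω → EuclideanSpace ℝ (Fin d)) (ε : ℕ → Ω → ℝ)
    (hXmeas : ∀ i, Measurable (X i)) (hεmeas : ∀ i, Measurable (ε i))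
    (hXχ : ∀ i, ∀ᵐ ω ∂μ, X i ω ∈ χ)
    (Cdens : ℝ)
    (hdens : ∀ i s, Measure.map (X i) μ s ≤ ENNReal.ofReal Cdens * volume s)
    -- the sample is i.i.d.
    (hindep : iIndepFun (fun i ω => (X i ω, ε i ω)) μ)
    (hident : ∀ i, IdentDistrib (fun ω => (X i ω, ε i ω)) (fun ω => (X 0 ω, ε 0 ω)) μ μ)
    -- (A2)
    (η0 : ℝ → ℝ)
    (hη0diff : ContDiffOn ℝ 1 η0 (Ici 0))
    (hη0anti : AntitoneOn η0 (Ici 0))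
    (hη0nonneg : ∀ t ∈ Ici (0 : ℝ), 0 ≤ η0 t)
    (hη0noncst : ∃ s ∈ Ici (0 : ℝ), ∃ t ∈ Ici (0 : ℝ), η0 s ≠ η0 t)
    -- (A3)
    (q Kq σ2 : ℝ) (hq : 2 ≤ q)
    (hcondmean : ∀ i, μ[ε i | MeasurableSpace.comap (X i) inferInstance] =ᵐ[μ] 0)
    (hmom : ∫ ω, |ε 0 ω| ^ q ∂μ = Kq ^ q)
    (hmint : Integrable (fun ω => |ε 0 ω| ^ q) μ)
    (hcondvar : ∀ i, ∀ᵐ ω ∂μ,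
      (μ[fun ω' => ε i ω' ^ 2 | MeasurableSpace.comap (X i) inferInstance]) ω ≤ σ2)
    -- responses
    (Y : ℕ → Ω → ℝ) (hY : ∀ i ω, Y i ω = η0 (‖θ0 - X i ω‖ ^ 2) + ε i ω)
    -- the profile least squares estimator
    (ηhat : ℕ → Ω → EuclideanSpace ℝ (Fin d) → ℝ → ℝ)
    (hηhatM : ∀ n ω, ∀ θ ∈ Θ, AntitoneOn (ηhat n ω θ) (Icc 0 (4 * T ^ 2)) ∧
      ∀ t ∈ Icc (0 : ℝ) (4 * T ^ 2), 0 ≤ ηhat n ω θ t)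
    (hηhatmin : ∀ n ω, ∀ θ ∈ Θ, ∀ η : ℝ → ℝ,
      AntitoneOn η (Icc 0 (4 * T ^ 2)) → (∀ t ∈ Icc (0 : ℝ) (4 * T ^ 2), 0 ≤ η t) →
      ∑ i ∈ Finset.range n, (Y i ω - ηhat n ω θ (‖θ - X i ω‖ ^ 2)) ^ 2 ≤
        ∑ i ∈ Finset.range n, (Y i ω - η (‖θ - X i ω‖ ^ 2)) ^ 2)
    -- right-continuous piecewise-constant extension: all values are fitted values
    (hηhatpc : ∀ n, 0 < n → ∀ ω, ∀ θ ∈ Θ, ∀ t ∈ Icc (0 : ℝ) (4 * T ^ 2),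
      ∃ i < n, ηhat n ω θ t = ηhat n ω θ (‖θ - X i ω‖ ^ 2)) :
    -- conclusion: sup_{θ∈Θ} ‖η̃_θ‖_∞ = O_p(n^{1/q})
    ∀ δ > (0 : ℝ), ∃ C : ℝ, ∃ N : ℕ, ∀ n ≥ N,
      μ {ω | ∃ θ ∈ Θ, ∃ t ∈ Icc (0 : ℝ) (4 * T ^ 2),
        C * (n : ℝ) ^ (1 / q) < |ηhat n ω θ t|} ≤ ENNReal.ofReal δ := by
  intro δ hδ
  -- basic positivity facts
  have hq0 : (0 : ℝ) < q := lt_of_lt_of_le two_pos hq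
  have hKq : 0 ≤ Kq ^ q := by
    rw [← hmom]; exact integral_nonneg fun ω => Real.rpow_nonneg (abs_nonneg _) q
  set K : ℝ := ((Kq ^ q + 1) / δ) ^ (1 / q) with hKdef
  have hbasepos : 0 < (Kq ^ q + 1) / δ := by positivity
  have hKpos : 0 < K := Real.rpow_pos_of_pos hbasepos _
  have hKq' : K ^ q = (Kq ^ q + 1) / δ := by
    rw [hKdef, ← Real.rpow_mul hbasepos.le, one_div_mul_cancel hq0.ne', Real.rpow_one]
  -- B = η0 0
  set B : ℝ := η0 0 with hBdef
  have hB0 : 0 ≤ B := hη0nonneg 0 self_mem_Ici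
  -- T ≥ 0
  have hT0 : 0 ≤ T := by
    obtain ⟨x, hx⟩ := hχint
    exact le_trans (norm_nonneg x) (hχT x (interior_subset hx))
  refine ⟨B + K, 1, fun n hn => ?_⟩
  have hn0 : 0 < n := hn
  have hnR : (1 : ℝ) ≤ (n : ℝ) := by exact_mod_cast hn
  have hrn1 : (1 : ℝ) ≤ (n : ℝ) ^ (1 / q) := Real.one_le_rpow hnR (by positivity)
  have hrnpos : (0 : ℝ) < (n : ℝ) ^ (1 / q) := lt_of_lt_of_le one_pos hrn1
  set rn : ℝ := (n : ℝ) ^ (1 / q) with hrndef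
  have hrange : (Finset.range n).Nonempty := Finset.nonempty_range_iff.mpr hn0.ne'
  -- good event
  set G : Set Ω := {ω | ∀ i, X i ω ∈ χ} with hGdef
  have hGc : μ Gᶜ = 0 := by
    have : Gᶜ ⊆ ⋃ i, {ω | X i ω ∉ χ} := by
      intro ω hω
      simp only [hGdef, mem_compl_iff, mem_setOf_eq, not_forall] at hω
      obtain ⟨i, hi⟩ := hω
      exact mem_iUnion.mpr ⟨i, hi⟩
    refine measure_mono_null this (measure_iUnion_null fun i => ?_)
    exact (hXχ i)
  -- deterministic bound on the good event
  have hdet : ∀ ω ∈ G, (∃ θ ∈ Θ, ∃ t ∈ Icc (0 : ℝ) (4 * T ^ 2),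
      (B + K) * rn < |ηhat n ω θ t|) → ∃ i ∈ Finset.range n, K * rn < |ε i ω| := by
    intro ω hω ⟨θ, hθ, t, ht, hlt⟩
    set f : ℝ → ℝ := ηhat n ω θ with hfdef
    obtain ⟨hfanti, hfnn⟩ := hηhatM n ω θ hθ
    -- data points lie in the interval
    have hz : ∀ i, ‖θ - X i ω‖ ^ 2 ∈ Icc (0 : ℝ) (4 * T ^ 2) := by
      intro i
      constructor
      · positivity
      · have h1 : ‖θ - X i ω‖ ≤ 2 * T := by
          calc ‖θ - X i ω‖ ≤ ‖θ‖ + ‖X i ω‖ := norm_sub_le _ _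
            _ ≤ T + T := add_le_add (hΘT θ hθ) (hχT _ (hω i))
            _ = 2 * T := by ring
        nlinarith [norm_nonneg (θ - X i ω)]
    -- level c
    set c : ℝ := max 0 ((Finset.range n).sup' hrange fun i => Y i ω) with hcdef
    have hc0 : 0 ≤ c := le_max_left _ _
    have hYc : ∀ i ∈ Finset.range n, Y i ω ≤ c :=
      fun i hi => le_trans (Finset.le_sup' (fun i => Y i ω) hi) (le_max_right _ _)
    -- fitted values are at most c
    have hfit : ∀ i ∈ Finset.range n, f (‖θ - X i ω‖ ^ 2) ≤ c := by
      by_contra hcon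
      push_neg at hcon
      obtain ⟨j, hj, hjc⟩ := hcon
      have hanti' : AntitoneOn (fun s => min (f s) c) (Icc 0 (4 * T ^ 2)) :=
        fun s hs u hu hsu => min_le_min (hfanti hs hu hsu) le_rfl
      have hnn' : ∀ s ∈ Icc (0 : ℝ) (4 * T ^ 2), 0 ≤ min (f s) c :=
        fun s hs => le_min (hfnn s hs) hc0
      have hmin := hηhatmin n ω θ hθ _ hanti' hnn'
      have hstrict : ∑ i ∈ Finset.range n, (Y i ω - min (f (‖θ - X i ω‖ ^ 2)) c) ^ 2 <
          ∑ i ∈ Finset.range n, (Y i ω - f (‖θ - X i ω‖ ^ 2)) ^ 2 := by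
        refine Finset.sum_lt_sum (fun i hi => ?_) ⟨j, hj, ?_⟩
        · rcases le_or_gt (f (‖θ - X i ω‖ ^ 2)) c with h | h
          · rw [min_eq_left h]
          · rw [min_eq_right h.le]
            nlinarith [hYc i hi]
        · rw [min_eq_right hjc.le]
          nlinarith [hYc j hj]
      exact absurd hmin (not_le.mpr hstrict)
    -- the sup is at most c
    obtain ⟨j, hj, hjt⟩ := hηhatpc n hn0 ω θ hθ t ht
    have hft : |f t| ≤ c := by
      rw [abs_of_nonneg (hfnn t ht), hjt]
      exact hfit j (Finset.mem_range.mpr hj)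
    -- c ≤ B + max |ε|
    set M : ℝ := (Finset.range n).sup' hrange fun i => |ε i ω| with hMdef
    have hM0 : 0 ≤ M := le_trans (abs_nonneg (ε 0 ω))
      (Finset.le_sup' (fun i => |ε i ω|) (Finset.mem_range.mpr hn0))
    have hcBM : c ≤ B + M := by
      refine max_le (by linarith) (Finset.sup'_le _ _ fun i hi => ?_)
      have hηB : η0 (‖θ0 - X i ω‖ ^ 2) ≤ B :=
        hη0anti self_mem_Ici (mem_Ici.mpr (by positivity)) (by positivity)
      have hεM : ε i ω ≤ M := le_trans (le_abs_self _) (Finset.le_sup' (fun i => |ε i ω|) hi)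
      rw [hY i ω]; linarith
    -- conclude
    have hKM : K * rn < M := by
      have h1 : B + K * rn ≤ (B + K) * rn := by nlinarith
      have h2 : (B + K) * rn < B + M := lt_of_lt_of_le hlt (le_trans hft hcBM)
      linarith
    exact (Finset.lt_sup'_iff _).mp hKM
  -- measure estimate
  set S : Set Ω := {ω | ∃ θ ∈ Θ, ∃ t ∈ Icc (0 : ℝ) (4 * T ^ 2),
      (B + K) * (n : ℝ) ^ (1 / q) < |ηhat n ω θ t|} with hSdef
  have hsub : S ⊆ (⋃ i ∈ Finset.range n, {ω | K * rn < |ε i ω|}) ∪ Gᶜ := by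
    intro ω hω
    rcases Classical.em (ω ∈ G) with hG | hG
    · left
      obtain ⟨i, hi, hlt⟩ := hdet ω hG hω
      exact mem_biUnion hi hlt
    · exact Or.inr hG
  -- per-index Markov bound
  have hmarkov : ∀ i ∈ Finset.range n,
      μ {ω | K * rn < |ε i ω|} ≤ ENNReal.ofReal (Kq ^ q / (K ^ q * n)) := by
    intro i _
    -- identical distribution of |ε i|^q
    have hg : Measurable fun p : EuclideanSpace ℝ (Fin d) × ℝ => |p.2| ^ q :=
      (measurable_snd.abs).pow measurable_const
    have hid : IdentDistrib (fun ω => |ε i ω| ^ q) (fun ω => |ε 0 ω| ^ q) μ μ :=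
      (hident i).comp hg
    have hint : Integrable (fun ω => |ε i ω| ^ q) μ := hid.integrable_iff.mpr hmint
    have hieq : ∫ ω, |ε i ω| ^ q ∂μ = Kq ^ q := by rw [hid.integral_eq, hmom]
    have hsub2 : {ω | K * rn < |ε i ω|} ⊆ {ω | (K * rn) ^ q ≤ |ε i ω| ^ q} := by
      intro ω hω
      exact (Real.rpow_lt_rpow (by positivity) hω hq0).le
    have hmark := mul_meas_ge_le_integral_of_nonneg
      (ae_of_all μ fun ω => Real.rpow_nonneg (abs_nonneg _) q) hint ((K * rn) ^ q)
    rw [hieq] at hmark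
    have hpow : (K * rn) ^ q = K ^ q * n := by
      rw [Real.mul_rpow hKpos.le hrnpos.le, hrndef, ← Real.rpow_mul (Nat.cast_nonneg n),
        one_div_mul_cancel hq0.ne', Real.rpow_one]
    have hfin : μ {ω | (K * rn) ^ q ≤ |ε i ω| ^ q} ≠ ⊤ := measure_ne_top μ _
    have hpos : (0 : ℝ) < (K * rn) ^ q := Real.rpow_pos_of_pos (by positivity) _
    calc μ {ω | K * rn < |ε i ω|} ≤ μ {ω | (K * rn) ^ q ≤ |ε i ω| ^ q} :=
          measure_mono hsub2
      _ = ENNReal.ofReal (μ {ω | (K * rn) ^ q ≤ |ε i ω| ^ q}).toReal :=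
          (ENNReal.ofReal_toReal hfin).symm
      _ ≤ ENNReal.ofReal (Kq ^ q / (K ^ q * n)) := by
          apply ENNReal.ofReal_le_ofReal
          rw [← hpow, le_div_iff₀ hpos]
          simp only [Measure.real] at hmark
          linarith [hmark]
  calc μ S ≤ μ ((⋃ i ∈ Finset.range n, {ω | K * rn < |ε i ω|}) ∪ Gᶜ) :=
        measure_mono hsub
    _ ≤ μ (⋃ i ∈ Finset.range n, {ω | K * rn < |ε i ω|}) + μ Gᶜ := measure_union_le _ _
    _ = μ (⋃ i ∈ Finset.range n, {ω | K * rn < |ε i ω|}) := by rw [hGc, add_zero]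
    _ ≤ ∑ i ∈ Finset.range n, μ {ω | K * rn < |ε i ω|} := measure_biUnion_finset_le _ _
    _ ≤ ∑ i ∈ Finset.range n, ENNReal.ofReal (Kq ^ q / (K ^ q * n)) :=
        Finset.sum_le_sum hmarkov
    _ = (n : ENNReal) * ENNReal.ofReal (Kq ^ q / (K ^ q * n)) := by
        rw [Finset.sum_const, Finset.card_range, nsmul_eq_mul]
    _ = ENNReal.ofReal ((n : ℝ) * (Kq ^ q / (K ^ q * n))) := by
        rw [ENNReal.ofReal_mul (by positivity), ENNReal.ofReal_natCast]
    _ ≤ ENNReal.ofReal δ := by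
        apply ENNReal.ofReal_le_ofReal
        have hKqpos : 0 < K ^ q := Real.rpow_pos_of_pos hKpos _
        have hnpos : (0 : ℝ) < n := by exact_mod_cast hn0
        have heq : (n : ℝ) * (Kq ^ q / (K ^ q * n)) = Kq ^ q / K ^ q := by
          field_simp
        rw [heq, hKq', div_div_eq_mul_div, div_le_iff₀ (by positivity)]
        nlinarith
end

section
/- Suppose assumptions (A1)–(A2) hold, and suppose the model is identifiable in the sense that for every β ∈ Θ and every nonincreasing g : [0,∞) → [0,∞) with g(|β − x|²) = η0(|θ0 − x|²) for P_X-almost every x ∈ χ, one has β = θ0. Let θ_n ∈ Θ and let η_n : [0,∞) → [0,∞) be nonincreasing, for each n. If ∫ (η_n(|θ_n − x|²) − η0(|θ0 − x|²))² dP_X(x) → 0 as n → ∞, then θ_n → θ0. (Deterministic separation lemma proved in the second part of the proof of Theorem 3.3: joint L²(P_X) consistency of a monotone-plus-location sequence forces consistency of the location.) -/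
open MeasureTheory Set Metric Filter

open scoped RealInnerProductSpace

section Aux

variable {d : ℕ}

private lemma aux_meas_comp (η : ℝ → ℝ) (hanti : AntitoneOn η (Ici 0))
    (θ : EuclideanSpace ℝ (Fin d)) :
    Measurable fun x : EuclideanSpace ℝ (Fin d) => η (‖θ - x‖ ^ 2) := by
  have h1 : Antitone fun t : ℝ => η (max t 0) := by
    intro s t hst
    exact hanti (Set.mem_Ici.mpr (le_max_right _ _)) (Set.mem_Ici.mpr (le_max_right _ _))
      (max_le_max hst le_rfl)
  have h2 : Measurable fun t : ℝ => η (max t 0) := h1.measurable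
  have h3 : Continuous fun x : EuclideanSpace ℝ (Fin d) => ‖θ - x‖ ^ 2 :=
    (continuous_const.sub continuous_id).norm.pow 2
  have h5 : (fun x : EuclideanSpace ℝ (Fin d) => η (‖θ - x‖ ^ 2))
      = (fun t : ℝ => η (max t 0)) ∘ fun x : EuclideanSpace ℝ (Fin d) => ‖θ - x‖ ^ 2 := by
    funext x
    simp only [Function.comp_apply, max_eq_left (sq_nonneg _)]
  rw [h5]
  exact h2.comp h3.measurable

end Aux

/-- **Separation lemma from the proof of Theorem 3.3.**
Under (A1)–(A2) and identifiability of the model, if `θ_n ∈ Θ` and `η_n` is nonincreasing and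
nonnegative on `[0,∞)` with `∫ (η_n(|θ_n-x|²) - η0(|θ0-x|²))² dP_X(x) → 0`, then `θ_n → θ0`. -/
theorem location_consistency_from_joint_L2_consistency
    {d : ℕ}
    (χ Θ : Set (EuclideanSpace ℝ (Fin d))) (T : ℝ)
    (θ0 : EuclideanSpace ℝ (Fin d))
    (PX : Measure (EuclideanSpace ℝ (Fin d))) [IsProbabilityMeasure PX]
    -- (A1)
    (hχbd : Bornology.IsBounded χ) (hχconv : Convex ℝ χ)
    (hχint : (interior χ).Nonempty)
    (hPXsupp : PX χᶜ = 0)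
    (Cdens : ℝ) (hdens : ∀ s, PX s ≤ ENNReal.ofReal Cdens * volume s)
    (hΘbd : Bornology.IsBounded Θ) (hΘint : (interior Θ).Nonempty)
    (hθ0 : θ0 ∈ interior Θ)
    (hχT : ∀ x ∈ χ, ‖x‖ ≤ T) (hΘT : ∀ θ ∈ Θ, ‖θ‖ ≤ T)
    -- (A2)
    (η0 : ℝ → ℝ)
    (hη0diff : ContDiffOn ℝ 1 η0 (Ici 0))
    (hη0anti : AntitoneOn η0 (Ici 0))
    (hη0nonneg : ∀ t ∈ Ici (0 : ℝ), 0 ≤ η0 t)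
    (hη0noncst : ∃ s ∈ Ici (0 : ℝ), ∃ t ∈ Ici (0 : ℝ), η0 s ≠ η0 t)
    -- identifiability of the model
    (hident : ∀ β ∈ Θ, ∀ g : ℝ → ℝ, AntitoneOn g (Ici 0) →
      (∀ t ∈ Ici (0 : ℝ), 0 ≤ g t) →
      (∀ᵐ x ∂PX, g (‖β - x‖ ^ 2) = η0 (‖θ0 - x‖ ^ 2)) → β = θ0)
    -- the sequences
    (θseq : ℕ → EuclideanSpace ℝ (Fin d)) (hθseq : ∀ n, θseq n ∈ Θ)
    (ηseq : ℕ → ℝ → ℝ)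
    (hηseqanti : ∀ n, AntitoneOn (ηseq n) (Ici 0))
    (hηseqnonneg : ∀ n, ∀ t ∈ Ici (0 : ℝ), 0 ≤ ηseq n t)
    (hconv : Tendsto
      (fun n => ∫ x, (ηseq n (‖θseq n - x‖ ^ 2) - η0 (‖θ0 - x‖ ^ 2)) ^ 2 ∂PX)
      atTop (nhds 0)) :
    Tendsto θseq atTop (nhds θ0) := by
  classical
  by_cases hsub : Subsingleton (EuclideanSpace ℝ (Fin d))
  · have hconst : θseq = fun _ => θ0 := funext fun n => Subsingleton.elim _ _
    rw [hconst]
    exact tendsto_const_nhds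
  haveI hnt : Nontrivial (EuclideanSpace ℝ (Fin d)) :=
    not_subsingleton_iff_nontrivial.mp hsub
  -- abbreviations
  set f : EuclideanSpace ℝ (Fin d) → ℝ := fun x => η0 (‖θ0 - x‖ ^ 2) with hf
  set u : ℕ → EuclideanSpace ℝ (Fin d) → ℝ := fun n x => ηseq n (‖θseq n - x‖ ^ 2) with hu
  have hmeasf : Measurable f := aux_meas_comp η0 hη0anti θ0
  have hmeasu : ∀ n, Measurable (u n) := fun n => aux_meas_comp (ηseq n) (hηseqanti n) (θseq n)
  -- pointwise bounds
  have hfnonneg : ∀ x, 0 ≤ f x := fun x => hη0nonneg _ (Set.mem_Ici.mpr (sq_nonneg _))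
  have hfbd : ∀ x, f x ≤ η0 0 := fun x =>
    hη0anti (Set.mem_Ici.mpr le_rfl) (Set.mem_Ici.mpr (sq_nonneg _)) (sq_nonneg _)
  have hunonneg : ∀ n x, 0 ≤ u n x := fun n x =>
    hηseqnonneg n _ (Set.mem_Ici.mpr (sq_nonneg _))
  have hubd : ∀ n x, u n x ≤ ηseq n 0 := fun n x =>
    hηseqanti n (Set.mem_Ici.mpr le_rfl) (Set.mem_Ici.mpr (sq_nonneg _)) (sq_nonneg _)
  -- integrability of the square differences
  have hint : ∀ n, Integrable (fun x => (u n x - f x) ^ 2) PX := by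
    intro n
    refine Integrable.mono' (integrable_const ((ηseq n 0 + η0 0) ^ 2))
      (((hmeasu n).sub hmeasf).pow_const 2).aestronglyMeasurable
      (ae_of_all _ fun x => ?_)
    have h1 := hunonneg n x
    have h2 := hubd n x
    have h3 := hfnonneg x
    have h4 := hfbd x
    rw [Real.norm_eq_abs, abs_of_nonneg (sq_nonneg _)]
    nlinarith
  -- convergence in measure
  have hTIM : TendstoInMeasure PX u atTop f := by
    rw [tendstoInMeasure_iff_dist]
    intro ε hε
    have hc2 : (0 : ℝ) < ε ^ 2 := by positivity
    have key : ∀ n, PX {x | ε ≤ dist (u n x) (f x)} ≤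
        ENNReal.ofReal (∫ x, (u n x - f x) ^ 2 ∂PX) / ENNReal.ofReal (ε ^ 2) := by
      intro n
      have h1 : ENNReal.ofReal (∫ x, (u n x - f x) ^ 2 ∂PX)
          = ∫⁻ x, ENNReal.ofReal ((u n x - f x) ^ 2) ∂PX :=
        ofReal_integral_eq_lintegral_ofReal (hint n) (ae_of_all _ fun x => sq_nonneg _)
      have h2 := mul_meas_ge_le_lintegral₀ (μ := PX)
        (f := fun x => ENNReal.ofReal ((u n x - f x) ^ 2))
        (ENNReal.measurable_ofReal.comp (((hmeasu n).sub hmeasf).pow_const 2)).aemeasurable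
        (ENNReal.ofReal (ε ^ 2))
      have h3 : {x : EuclideanSpace ℝ (Fin d) | ε ≤ dist (u n x) (f x)} ⊆
          {x : EuclideanSpace ℝ (Fin d) | ENNReal.ofReal (ε ^ 2) ≤ ENNReal.ofReal ((u n x - f x) ^ 2)} := by
        intro x hx
        simp only [Set.mem_setOf_eq] at hx ⊢
        apply ENNReal.ofReal_le_ofReal
        rw [Real.dist_eq] at hx
        calc ε ^ 2 ≤ |u n x - f x| ^ 2 := pow_le_pow_left₀ hε.le hx 2
          _ = (u n x - f x) ^ 2 := sq_abs _
      calc PX {x | ε ≤ dist (u n x) (f x)}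
          ≤ PX {x | ENNReal.ofReal (ε ^ 2) ≤ ENNReal.ofReal ((u n x - f x) ^ 2)} :=
            measure_mono h3
        _ ≤ (∫⁻ x, ENNReal.ofReal ((u n x - f x) ^ 2) ∂PX) / ENNReal.ofReal (ε ^ 2) := by
            rw [ENNReal.le_div_iff_mul_le (Or.inl (ENNReal.ofReal_pos.mpr hc2).ne') (Or.inl ENNReal.ofReal_ne_top)]
            rw [mul_comm]
            exact h2
        _ = _ := by rw [h1]
    have h4 : Tendsto (fun n => ENNReal.ofReal (∫ x, (u n x - f x) ^ 2 ∂PX)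
        / ENNReal.ofReal (ε ^ 2)) atTop (nhds 0) := by
      have h5 : Tendsto (fun n => ENNReal.ofReal (∫ x, (u n x - f x) ^ 2 ∂PX)) atTop (nhds 0) := by
        have := (ENNReal.continuous_ofReal.tendsto 0).comp hconv
        rw [ENNReal.ofReal_zero] at this
        exact this
      have h6 := ENNReal.Tendsto.div_const h5 (Or.inr (ENNReal.ofReal_pos.mpr hc2).ne')
      simpa using h6
    exact tendsto_of_tendsto_of_tendsto_of_le_of_le tendsto_const_nhds h4
      (fun n => zero_le) key
  -- main argument via subsequences
  apply Filter.tendsto_of_subseq_tendsto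
  intro ns hns
  have hball : ∀ k, θseq (ns k) ∈ closedBall (0 : EuclideanSpace ℝ (Fin d)) T := fun k =>
    mem_closedBall_zero_iff.mpr (hΘT _ (hθseq _))
  obtain ⟨β, hβmem, φ, hφmono, hβ⟩ :=
    (isCompact_closedBall (0 : EuclideanSpace ℝ (Fin d)) T).tendsto_subseq hball
  have hTIM2 : TendstoInMeasure PX (fun k => u (ns (φ k))) atTop f := by
    intro ε hε
    exact (hTIM ε hε).comp (hns.comp hφmono.tendsto_atTop)
  obtain ⟨ms, hmsmono, hae⟩ := hTIM2.exists_seq_tendsto_ae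
  set σ : ℕ → ℕ := fun k => ns (φ (ms k)) with hσ
  have hθσ : Tendsto (fun k => θseq (σ k)) atTop (nhds β) :=
    hβ.comp hmsmono.tendsto_atTop
  -- the good set
  set A : Set (EuclideanSpace ℝ (Fin d)) := {x | Tendsto (fun k => u (σ k) x) atTop (nhds (f x))} with hAdef
  have hA : PX Aᶜ = 0 := by
    have := hae
    rw [ae_iff] at this
    exact this
  -- key monotonicity transfer for the center β
  have hkeyβ : ∀ x ∈ A, ∀ y ∈ A, ‖β - x‖ ^ 2 < ‖β - y‖ ^ 2 → f y ≤ f x := by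
    intro x hx y hy hlt
    have hcontx : Continuous fun z : EuclideanSpace ℝ (Fin d) => ‖z - x‖ ^ 2 :=
      (continuous_id.sub continuous_const).norm.pow 2
    have hconty : Continuous fun z : EuclideanSpace ℝ (Fin d) => ‖z - y‖ ^ 2 :=
      (continuous_id.sub continuous_const).norm.pow 2
    have hx' : Tendsto (fun k => ‖θseq (σ k) - x‖ ^ 2) atTop (nhds (‖β - x‖ ^ 2)) :=
      (hcontx.tendsto β).comp hθσ
    have hy' : Tendsto (fun k => ‖θseq (σ k) - y‖ ^ 2) atTop (nhds (‖β - y‖ ^ 2)) :=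
      (hconty.tendsto β).comp hθσ
    have hev : ∀ᶠ k in atTop, ‖θseq (σ k) - x‖ ^ 2 < ‖θseq (σ k) - y‖ ^ 2 :=
      hx'.eventually_lt hy' hlt
    have hle : ∀ᶠ k in atTop, u (σ k) y ≤ u (σ k) x :=
      hev.mono fun k hk =>
        hηseqanti (σ k) (Set.mem_Ici.mpr (sq_nonneg _)) (Set.mem_Ici.mpr (sq_nonneg _)) hk.le
    exact le_of_tendsto_of_tendsto hy hx hle
  have hkeyθ0 : ∀ x y : EuclideanSpace ℝ (Fin d), ‖θ0 - x‖ ^ 2 < ‖θ0 - y‖ ^ 2 → f y ≤ f x := fun x y h =>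
    hη0anti (Set.mem_Ici.mpr (sq_nonneg _)) (Set.mem_Ici.mpr (sq_nonneg _)) h.le
  -- it suffices to show β = θ0
  suffices hβθ : β = θ0 by
    refine ⟨fun k => φ (ms k), ?_⟩
    rw [← hβθ]
    exact hθσ
  by_contra hβθ
  -- choose a point β' strictly between θ0 and β, inside Θ
  obtain ⟨δ, hδpos, hδ⟩ := Metric.isOpen_iff.mp isOpen_interior θ0 hθ0
  have hβθ0 : (0 : ℝ) < ‖β - θ0‖ := by
    rw [norm_pos_iff, sub_ne_zero]
    exact hβθ
  set t : ℝ := min 1 (δ / (2 * ‖β - θ0‖)) with ht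
  have htpos : 0 < t := lt_min one_pos (by positivity)
  have ht1 : t ≤ 1 := min_le_left _ _
  set β' : EuclideanSpace ℝ (Fin d) := θ0 + t • (β - θ0) with hβ'
  have hβ'Θ : β' ∈ Θ := by
    apply interior_subset
    apply hδ
    rw [Metric.mem_ball, dist_eq_norm]
    have : β' - θ0 = t • (β - θ0) := by rw [hβ']; abel
    rw [this, norm_smul, Real.norm_eq_abs, abs_of_pos htpos]
    have h1 : t ≤ δ / (2 * ‖β - θ0‖) := min_le_right _ _
    calc t * ‖β - θ0‖ ≤ (δ / (2 * ‖β - θ0‖)) * ‖β - θ0‖ := by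
          apply mul_le_mul_of_nonneg_right h1 (norm_nonneg _)
      _ = δ / 2 := by field_simp
      _ < δ := by linarith
  -- key monotonicity transfer for the center β' (convexity of the condition)
  have hkeyβ' : ∀ x ∈ A, ∀ y ∈ A, ‖β' - x‖ ^ 2 < ‖β' - y‖ ^ 2 → f y ≤ f x := by
    intro x hx y hy hlt
    by_contra hcon
    push_neg at hcon
    have h1 : ‖θ0 - y‖ ^ 2 ≤ ‖θ0 - x‖ ^ 2 := by
      by_contra h; push_neg at h
      exact absurd (hkeyθ0 x y h) (not_le.mpr hcon)
    have h2 : ‖β - y‖ ^ 2 ≤ ‖β - x‖ ^ 2 := by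
      by_contra h; push_neg at h
      exact absurd (hkeyβ x hx y hy h) (not_le.mpr hcon)
    have hid : ∀ c : EuclideanSpace ℝ (Fin d), ‖c - x‖ ^ 2 - ‖c - y‖ ^ 2
        = ‖x‖ ^ 2 - ‖y‖ ^ 2 - 2 * ⟪c, x - y⟫ := by
      intro c
      rw [norm_sub_sq_real, norm_sub_sq_real, inner_sub_right]
      ring
    have hinner : ⟪β', x - y⟫ = (1 - t) * ⟪θ0, x - y⟫ + t * ⟪β, x - y⟫ := by
      rw [hβ', inner_add_left, inner_smul_left, inner_sub_left]
      simp only [conj_trivial]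
      ring
    have hfin : ‖β' - x‖ ^ 2 - ‖β' - y‖ ^ 2
        = (1 - t) * (‖θ0 - x‖ ^ 2 - ‖θ0 - y‖ ^ 2) + t * (‖β - x‖ ^ 2 - ‖β - y‖ ^ 2) := by
      rw [hid β', hid θ0, hid β, hinner]
      ring
    nlinarith [mul_nonneg (sub_nonneg.mpr ht1) (sub_nonneg.mpr h1),
      mul_nonneg htpos.le (sub_nonneg.mpr h2)]
  -- construct the monotone envelope g
  set S : ℝ → Set ℝ := fun s => insert 0 (f '' {y | y ∈ A ∧ s < ‖β' - y‖ ^ 2}) with hS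
  set g : ℝ → ℝ := fun s => sSup (S s) with hg
  have hbdd : ∀ s, BddAbove (S s) := by
    intro s
    refine ⟨η0 0, ?_⟩
    rintro r (rfl | ⟨y, _, rfl⟩)
    · exact hη0nonneg 0 (Set.mem_Ici.mpr le_rfl)
    · exact hfbd y
  have hne : ∀ s, (S s).Nonempty := fun s => ⟨0, mem_insert _ _⟩
  have hganti : Antitone g := by
    intro s s' hss'
    apply csSup_le_csSup (hbdd s) (hne s')
    apply insert_subset_insert
    apply image_mono
    intro y hy
    exact ⟨hy.1, lt_of_le_of_lt hss' hy.2⟩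
  have hgnonneg : ∀ s, 0 ≤ g s := fun s => le_csSup (hbdd s) (mem_insert _ _)
  have hupper : ∀ x ∈ A, g (‖β' - x‖ ^ 2) ≤ f x := by
    intro x hx
    apply csSup_le (hne _)
    rintro r (rfl | ⟨y, ⟨hyA, hylt⟩, rfl⟩)
    · exact hfnonneg x
    · exact hkeyβ' x hx y hyA hylt
  have hlower : ∀ x ∈ A, ∀ s < ‖β' - x‖ ^ 2, f x ≤ g s := by
    intro x hx s hs
    exact le_csSup (hbdd s) (mem_insert_of_mem _ ⟨x, ⟨hx, hs⟩, rfl⟩)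
  -- discontinuity points of g are countable
  have hDcount : {s : ℝ | ¬ContinuousAt g s}.Countable := by
    have hmono : Monotone fun s => -g s := fun a b hab => neg_le_neg (hganti hab)
    refine Set.Countable.mono ?_ hmono.countable_not_continuousAt
    intro s hs
    simp only [Set.mem_setOf_eq] at hs ⊢
    intro hcont
    exact hs (by convert (continuous_neg.continuousAt).comp hcont using 1; funext y; simp)
  -- discrepancy points lie on spheres of discontinuity radii
  have hjump : ∀ x ∈ A, g (‖β' - x‖ ^ 2) ≠ f x → ¬ContinuousAt g (‖β' - x‖ ^ 2) := by
    intro x hx hnex hcont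
    have hlt : g (‖β' - x‖ ^ 2) < f x := lt_of_le_of_ne (hupper x hx) hnex
    have hlim : Tendsto g (nhdsWithin (‖β' - x‖ ^ 2) (Iio (‖β' - x‖ ^ 2)))
        (nhds (g (‖β' - x‖ ^ 2))) :=
      hcont.tendsto.mono_left nhdsWithin_le_nhds
    have hge : f x ≤ g (‖β' - x‖ ^ 2) := by
      refine ge_of_tendsto hlim ?_
      exact eventually_nhdsWithin_of_forall fun s hs => hlower x hx s hs
    linarith
  have hbadnull : PX {x | x ∈ A ∧ g (‖β' - x‖ ^ 2) ≠ f x} = 0 := by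
    have hsub : {x | x ∈ A ∧ g (‖β' - x‖ ^ 2) ≠ f x} ⊆
        ⋃ s ∈ {s : ℝ | ¬ContinuousAt g s}, {x : EuclideanSpace ℝ (Fin d) | ‖β' - x‖ ^ 2 = s} := by
      rintro x ⟨hxA, hxne⟩
      exact mem_biUnion (hjump x hxA hxne) rfl
    refine measure_mono_null hsub ?_
    refine (measure_biUnion_null_iff hDcount).mpr fun s _ => ?_
    have hsphere : {x : EuclideanSpace ℝ (Fin d) | ‖β' - x‖ ^ 2 = s} ⊆ sphere β' (Real.sqrt s) := by
      intro x hx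
      simp only [Set.mem_setOf_eq] at hx
      rw [mem_sphere, dist_eq_norm, ← norm_sub_rev, ← hx, Real.sqrt_sq_eq_abs,
        abs_of_nonneg (norm_nonneg _)]
    refine measure_mono_null hsphere ?_
    have hvol : volume (sphere β' (Real.sqrt s)) = 0 :=
      Measure.addHaar_sphere volume β' _
    have := hdens (sphere β' (Real.sqrt s))
    rw [hvol, mul_zero] at this
    exact le_antisymm this zero_le
  -- g matches f almost everywhere
  have hmatch : ∀ᵐ x ∂PX, g (‖β' - x‖ ^ 2) = η0 (‖θ0 - x‖ ^ 2) := by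
    rw [ae_iff]
    refine measure_mono_null ?_ (measure_union_null hA hbadnull)
    intro x hx
    simp only [Set.mem_setOf_eq] at hx
    by_cases hxA : x ∈ A
    · exact Or.inr ⟨hxA, hx⟩
    · exact Or.inl hxA
  -- identifiability gives β' = θ0, hence β = θ0, contradiction
  have hβ'eq : β' = θ0 :=
    hident β' hβ'Θ g (hganti.antitoneOn _) (fun s _ => hgnonneg s) hmatch
  have hzero : t • (β - θ0) = 0 := by
    have : θ0 + t • (β - θ0) = θ0 := hβ'eq
    simpa using this
  rcases smul_eq_zero.mp hzero with h | h
  · exact absurd h (ne_of_gt htpos)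
  · exact hβθ (sub_eq_zero.mp h)
end

section
/- Suppose assumptions (A1)–(A3) hold, so in particular η0 is nonincreasing, and set M(θ) := E[(Y − η_θ(|θ−X|²))(X − θ)]. Then for every θ ∈ Θ: (i) M(θ) = E[Cov(X, η0(|θ0−X|²) | |θ−X|²)], the expectation of the coordinatewise conditional covariances; (ii) M(θ0) = 0; and (iii) the conditional covariance Cov((θ−θ0)ᵀ(X−θ), η0(|θ0−X|²) | |θ−X|²) has an almost surely constant sign — it is almost surely nonpositive when η0 is nonincreasing (and almost surely nonnegative when η0 is nondecreasing) — so that (θ−θ0)ᵀ M(θ) = E[Cov((θ−θ0)ᵀ(X−θ), η0(|θ0−X|²) | |θ−X|²)] is nonpositive for nonincreasing η0. (Lemma F.1, parts (eq:m_cov) and (1): the population score has θ0 as a zero and points monotonically with respect to θ0.) -/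
open MeasureTheory Set Metric

open Filter
open scoped RealInnerProductSpace


namespace PopScoreAux

variable {Ω : Type*} {m m0 : MeasurableSpace Ω}

lemma bdd_int (μ : Measure Ω) [IsFiniteMeasure μ] {f : Ω → ℝ}
    (hf : AEStronglyMeasurable f μ) (C : ℝ) (h : ∀ᵐ ω ∂μ, |f ω| ≤ C) :
    Integrable f μ :=
  ⟨hf, HasFiniteIntegral.of_bounded (C := C) (by simpa [Real.norm_eq_abs] using h)⟩

lemma ae_bdd_condexp' {μ : Measure Ω} [IsFiniteMeasure μ] {f : Ω → ℝ} (C : ℝ)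
    (hC : 0 ≤ C) (h : ∀ᵐ ω ∂μ, |f ω| ≤ C) : ∀ᵐ ω ∂μ, |(μ[f|m]) ω| ≤ C := by
  lift C to NNReal using hC
  exact ae_bdd_condExp_of_ae_bdd h

lemma int_mul_bdd (μ : Measure Ω) [IsFiniteMeasure μ] {e q : Ω → ℝ}
    (he : Integrable e μ) (hq : AEStronglyMeasurable q μ) (C : ℝ)
    (hb : ∀ᵐ ω ∂μ, |q ω| ≤ C) : Integrable (fun ω => e ω * q ω) μ := by
  refine Integrable.mono' (he.abs.const_mul C) (he.aestronglyMeasurable.mul hq) ?_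
  filter_upwards [hb] with ω hω
  rw [Real.norm_eq_abs, abs_mul]
  calc |e ω| * |q ω| ≤ |e ω| * C := mul_le_mul_of_nonneg_left hω (abs_nonneg _)
    _ = C * |e ω| := mul_comm _ _

lemma eps_orth (hm : m ≤ m0) (μ : Measure Ω) [IsProbabilityMeasure μ] {e q : Ω → ℝ}
    (hq : StronglyMeasurable[m] q) (he : Integrable e μ)
    (hqe : Integrable (fun ω => q ω * e ω) μ) (hce : μ[e|m] =ᵐ[μ] 0) :
    ∫ ω, e ω * q ω ∂μ = 0 := by
  have h1 : ∫ ω, e ω * q ω ∂μ = ∫ ω, q ω * e ω ∂μ :=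
    integral_congr_ae (Eventually.of_forall fun ω => mul_comm _ _)
  have h2 : ∫ ω, q ω * e ω ∂μ = ∫ ω, (μ[fun ω' => q ω' * e ω'|m]) ω ∂μ :=
    (integral_condExp hm).symm
  have h3 : μ[fun ω' => q ω' * e ω'|m] =ᵐ[μ] 0 := by
    refine (condExp_mul_of_stronglyMeasurable_left hq hqe he).trans ?_
    filter_upwards [hce] with ω hω
    simp only [Pi.mul_apply, Pi.zero_apply] at *
    rw [hω, mul_zero]
  rw [h1, h2, integral_congr_ae h3]; simp

/-- Master covariance identity. -/
lemma cov_master (hm : m ≤ m0) (μ : Measure Ω) [IsProbabilityMeasure μ]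
    (f p e c : Ω → ℝ) (c0 Cf Cp : ℝ) (hCf : 0 ≤ Cf) (hCp : 0 ≤ Cp)
    (hfmeas : AEStronglyMeasurable f μ) (hpmeas : AEStronglyMeasurable p μ)
    (hfb : ∀ᵐ ω ∂μ, |f ω| ≤ Cf) (hpb : ∀ᵐ ω ∂μ, |p ω| ≤ Cp)
    (hep : ∫ ω, e ω * (p ω - c0) ∂μ = 0)
    (hepInt : Integrable (fun ω => e ω * (p ω - c0)) μ)
    (hc : c =ᵐ[μ] μ[f|m]) :
    ∫ ω, (f ω + e ω - c ω) * (p ω - c0) ∂μ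
      = ∫ ω, ((μ[fun ω' => p ω' * f ω'|m]) ω - (μ[p|m]) ω * (μ[f|m]) ω) ∂μ := by
  have hmfaesm : AEStronglyMeasurable (μ[f|m]) μ :=
    (stronglyMeasurable_condExp.mono hm).aestronglyMeasurable
  have hmpaesm : AEStronglyMeasurable (μ[p|m]) μ :=
    (stronglyMeasurable_condExp.mono hm).aestronglyMeasurable
  have hfInt : Integrable f μ := bdd_int μ hfmeas Cf hfb
  have hpInt : Integrable p μ := bdd_int μ hpmeas Cp hpb
  have hmfb : ∀ᵐ ω ∂μ, |(μ[f|m]) ω| ≤ Cf := ae_bdd_condexp' Cf hCf hfb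
  have hmpb : ∀ᵐ ω ∂μ, |(μ[p|m]) ω| ≤ Cp := ae_bdd_condexp' Cp hCp hpb
  -- integrabilities
  have habs : ∀ {u v : Ω → ℝ} {Cu Cv : ℝ}, (∀ᵐ ω ∂μ, |u ω| ≤ Cu) → (∀ᵐ ω ∂μ, |v ω| ≤ Cv) →
      AEStronglyMeasurable u μ → AEStronglyMeasurable v μ →
      Integrable (fun ω => u ω * v ω) μ := by
    intro u v Cu Cv hu hv hum hvm
    refine bdd_int μ (hum.mul hvm) (Cu * Cv) ?_
    filter_upwards [hu, hv] with ω h1 h2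
    rw [abs_mul]
    exact mul_le_mul h1 h2 (abs_nonneg _) ((abs_nonneg _).trans h1)
  have hpf : Integrable (fun ω => p ω * f ω) μ := habs hpb hfb hpmeas hfmeas
  have hmfp : Integrable (fun ω => (μ[f|m]) ω * p ω) μ := habs hmfb hpb hmfaesm hpmeas
  have hfp : Integrable (fun ω => f ω * p ω) μ := habs hfb hpb hfmeas hpmeas
  have hBC : Integrable (fun ω => (μ[p|m]) ω * (μ[f|m]) ω) μ := habs hmpb hmfb hmpaesm hmfaesm
  -- step A : replace c by condexp and split off the noise term
  have h1 : (fun ω => (f ω + e ω - c ω) * (p ω - c0))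
      =ᵐ[μ] fun ω => ((f ω - (μ[f|m]) ω) * p ω - c0 * (f ω - (μ[f|m]) ω))
        + e ω * (p ω - c0) := by
    filter_upwards [hc] with ω hω
    rw [hω]; ring
  have hsubInt : Integrable (fun ω => (f ω - (μ[f|m]) ω) * p ω) μ :=
    habs (by filter_upwards [hfb, hmfb] with ω h1 h2; calc |f ω - (μ[f|m]) ω| ≤ |f ω| + |(μ[f|m]) ω| := abs_sub _ _
      _ ≤ Cf + Cf := add_le_add h1 h2) hpb (hfmeas.sub hmfaesm) hpmeas
  have hconstInt : Integrable (fun ω => c0 * (f ω - (μ[f|m]) ω)) μ :=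
    ((hfInt.sub integrable_condExp).const_mul c0)
  have hA : Integrable (fun ω => (f ω - (μ[f|m]) ω) * p ω - c0 * (f ω - (μ[f|m]) ω)) μ :=
    hsubInt.sub hconstInt
  rw [integral_congr_ae h1, integral_add hA hepInt, hep, add_zero]
  rw [integral_sub hsubInt hconstInt]
  have hzero : ∫ ω, (f ω - (μ[f|m]) ω) ∂μ = 0 := by
    rw [integral_sub hfInt integrable_condExp, integral_condExp hm, sub_self]
  have hzero' : ∫ ω, c0 * (f ω - (μ[f|m]) ω) ∂μ = 0 := by
    rw [integral_const_mul, hzero, mul_zero]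
  rw [hzero', sub_zero]
  -- step C : expand (f - mf) p
  have hC : ∫ ω, (f ω - (μ[f|m]) ω) * p ω ∂μ
      = ∫ ω, f ω * p ω ∂μ - ∫ ω, (μ[f|m]) ω * p ω ∂μ := by
    rw [← integral_sub hfp hmfp]
    exact integral_congr_ae (Eventually.of_forall fun ω => by ring)
  -- step D
  have hD : ∫ ω, f ω * p ω ∂μ = ∫ ω, (μ[fun ω' => p ω' * f ω'|m]) ω ∂μ := by
    rw [integral_condExp hm]
    exact integral_congr_ae (Eventually.of_forall fun ω => mul_comm _ _)
  -- step E
  have hE : ∫ ω, (μ[f|m]) ω * p ω ∂μ = ∫ ω, (μ[p|m]) ω * (μ[f|m]) ω ∂μ := by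
    have e1 : ∫ ω, (μ[f|m]) ω * p ω ∂μ = ∫ ω, (μ[fun ω' => (μ[f|m]) ω' * p ω'|m]) ω ∂μ :=
      (integral_condExp hm).symm
    have e2 : μ[fun ω' => (μ[f|m]) ω' * p ω'|m] =ᵐ[μ] fun ω => (μ[f|m]) ω * (μ[p|m]) ω := by
      have := condExp_mul_of_stronglyMeasurable_left (μ := μ) (m := m)
        (f := μ[f|m]) (g := p) stronglyMeasurable_condExp hmfp hpInt
      exact this
    rw [e1, integral_congr_ae e2]
    exact integral_congr_ae (Eventually.of_forall fun ω => mul_comm _ _)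
  rw [hC, hD, hE, ← integral_sub integrable_condExp hBC]

end PopScoreAux

namespace PopScoreAux2
open PopScoreAux

variable {Ω : Type*} {m m0 : MeasurableSpace Ω}

/-- A.s. nonpositivity of the conditional covariance of `U` with an antitone
function of `g + cst + 2U`, given `m = σ(g)`-measurable `g`. -/
lemma cov_sign (hm : m ≤ m0) (μ : Measure Ω) [IsProbabilityMeasure μ]
    (U g f : Ω → ℝ) (η' : ℝ → ℝ) (cst CU Cf : ℝ) (hCU : 0 ≤ CU)
    (hη'anti : Antitone η') (hη'meas : Measurable η') (hη'bdd : ∀ t, |η' t| ≤ Cf)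
    (hgm : Measurable[m] g)
    (hfeq : ∀ ω, f ω = η' (g ω + cst + 2 * U ω))
    (hUmeas : AEStronglyMeasurable U μ) (hfmeas : AEStronglyMeasurable f μ)
    (hUb : ∀ᵐ ω ∂μ, |U ω| ≤ CU) :
    ∀ᵐ ω ∂μ, (μ[fun ω' => U ω' * f ω'|m]) ω - (μ[U|m]) ω * (μ[f|m]) ω ≤ 0 := by
  have hUInt : Integrable U μ := bdd_int μ hUmeas CU hUb
  have hfb : ∀ᵐ ω ∂μ, |f ω| ≤ Cf := Filter.Eventually.of_forall fun ω => by
    rw [hfeq]; exact hη'bdd _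
  have hCf : 0 ≤ Cf := (abs_nonneg _).trans (hη'bdd 0)
  have hfInt : Integrable f μ := bdd_int μ hfmeas Cf hfb
  set mU := μ[U|m] with hmUdef
  have hmUsm : StronglyMeasurable[m] mU := stronglyMeasurable_condExp
  have hmUaesm : AEStronglyMeasurable mU μ := (hmUsm.mono hm).aestronglyMeasurable
  have hmUb : ∀ᵐ ω ∂μ, |mU ω| ≤ CU := ae_bdd_condexp' CU hCU hUb
  set h : Ω → ℝ := fun ω => η' (g ω + cst + 2 * mU ω) with hhdef
  have hhsm : StronglyMeasurable[m] h :=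
    (hη'meas.comp ((hgm.add_const cst).add (hmUsm.measurable.const_mul 2))).stronglyMeasurable
  have hhaesm : AEStronglyMeasurable h μ := (hhsm.mono hm).aestronglyMeasurable
  have hhb : ∀ᵐ ω ∂μ, |h ω| ≤ Cf := Filter.Eventually.of_forall fun ω => hη'bdd _
  have habs : ∀ {u v : Ω → ℝ} {Cu Cv : ℝ}, (∀ᵐ ω ∂μ, |u ω| ≤ Cu) → (∀ᵐ ω ∂μ, |v ω| ≤ Cv) →
      AEStronglyMeasurable u μ → AEStronglyMeasurable v μ →
      Integrable (fun ω => u ω * v ω) μ := by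
    intro u v Cu Cv hu hv hum hvm
    refine bdd_int μ (hum.mul hvm) (Cu * Cv) ?_
    filter_upwards [hu, hv] with ω h1 h2
    rw [abs_mul]
    exact mul_le_mul h1 h2 (abs_nonneg _) ((abs_nonneg _).trans h1)
  have hUf : Integrable (fun ω => U ω * f ω) μ := habs hUb hfb hUmeas hfmeas
  have hhU : Integrable (fun ω => h ω * U ω) μ := habs hhb hUb hhaesm hUmeas
  have hmUf : Integrable (fun ω => mU ω * f ω) μ := habs hmUb hfb hmUaesm hfmeas
  have hmUh : Integrable (fun ω => mU ω * h ω) μ := habs hmUb hhb hmUaesm hhaesm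
  set W : Ω → ℝ := fun ω => (U ω - mU ω) * (f ω - h ω) with hWdef
  have hWle : ∀ ω, W ω ≤ 0 := by
    intro ω
    show (U ω - mU ω) * (f ω - h ω) ≤ 0
    rcases le_total (U ω) (mU ω) with hle | hle
    · have h1 : h ω ≤ f ω := by rw [hfeq]; exact hη'anti (by linarith)
      exact mul_nonpos_of_nonpos_of_nonneg (by linarith) (by linarith)
    · have h1 : f ω ≤ h ω := by rw [hfeq]; exact hη'anti (by linarith)
      exact mul_nonpos_of_nonneg_of_nonpos (by linarith) (by linarith)
  have hW0 : μ[W|m] ≤ᵐ[μ] 0 := condExp_nonpos (Filter.Eventually.of_forall hWle)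
  have hA : Integrable (fun ω => U ω * f ω - h ω * U ω) μ := hUf.sub hhU
  have hB : Integrable (fun ω => mU ω * f ω - mU ω * h ω) μ := hmUf.sub hmUh
  have hWeq : W = fun ω => (U ω * f ω - h ω * U ω) - (mU ω * f ω - mU ω * h ω) := by
    funext ω; simp only [hWdef]; ring
  have hsplit : μ[W|m] =ᵐ[μ]
      μ[fun ω => U ω * f ω - h ω * U ω|m] - μ[fun ω => mU ω * f ω - mU ω * h ω|m] := by
    rw [hWeq]; exact condExp_sub hA hB m
  have hs1 : μ[fun ω => U ω * f ω - h ω * U ω|m] =ᵐ[μ]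
      μ[fun ω => U ω * f ω|m] - μ[fun ω => h ω * U ω|m] := condExp_sub hUf hhU m
  have hs2 : μ[fun ω => mU ω * f ω - mU ω * h ω|m] =ᵐ[μ]
      μ[fun ω => mU ω * f ω|m] - μ[fun ω => mU ω * h ω|m] := condExp_sub hmUf hmUh m
  have hp1 : μ[fun ω => h ω * U ω|m] =ᵐ[μ] h * μ[U|m] :=
    condExp_mul_of_stronglyMeasurable_left hhsm hhU hUInt
  have hp2 : μ[fun ω => mU ω * f ω|m] =ᵐ[μ] mU * μ[f|m] :=
    condExp_mul_of_stronglyMeasurable_left hmUsm hmUf hfInt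
  have hp3 : μ[fun ω => mU ω * h ω|m] = fun ω => mU ω * h ω :=
    condExp_of_stronglyMeasurable hm (hmUsm.mul hhsm) hmUh
  filter_upwards [hW0, hsplit, hs1, hs2, hp1, hp2] with ω w0 w1 w2 w3 w4 w5
  have w6 : (μ[fun ω => mU ω * h ω|m]) ω = mU ω * h ω := congrFun hp3 ω
  simp only [Pi.sub_apply, Pi.mul_apply, Pi.zero_apply] at w0 w1 w2 w3 w4 w5
  have := mul_comm (h ω) (mU ω)
  linarith
end PopScoreAux2

open PopScoreAux PopScoreAux2


/-- **Lemma F.1, displays (eq:m_cov) and part (1).** Under (A1)–(A3) with `η0` nonincreasing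
and `M(θ) = E[(Y - η_θ(|θ-X|²))(X - θ)]`:
(i) `M(θ) = E[Cov(X, η0(|θ0-X|²) | |θ-X|²)]` coordinatewise;
(ii) `M(θ0) = 0`; and
(iii) `Cov((θ-θ0)ᵀ(X-θ), η0(|θ0-X|²) | |θ-X|²)` is almost surely nonpositive, so that
`(θ-θ0)ᵀ M(θ) = E[Cov((θ-θ0)ᵀ(X-θ), η0(|θ0-X|²) | |θ-X|²)] ≤ 0`. -/

theorem population_score_properties
    {d : ℕ} {Ω : Type*} [MeasurableSpace Ω] (μ : Measure Ω) [IsProbabilityMeasure μ]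
    (χ Θ : Set (EuclideanSpace ℝ (Fin d))) (T : ℝ)
    (θ0 : EuclideanSpace ℝ (Fin d))
    -- (A1)
    (hχbd : Bornology.IsBounded χ) (hχconv : Convex ℝ χ)
    (hχint : (interior χ).Nonempty)
    (hΘbd : Bornology.IsBounded Θ) (hΘint : (interior Θ).Nonempty)
    (hθ0 : θ0 ∈ interior Θ)
    (hχT : ∀ x ∈ χ, ‖x‖ ≤ T) (hΘT : ∀ θ ∈ Θ, ‖θ‖ ≤ T)
    (X : Ω → EuclideanSpace ℝ (Fin d)) (ε : Ω → ℝ)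
    (hXmeas : Measurable X) (hεmeas : Measurable ε)
    (hXχ : ∀ᵐ ω ∂μ, X ω ∈ χ)
    (Cdens : ℝ)
    (hdens : ∀ s, Measure.map X μ s ≤ ENNReal.ofReal Cdens * volume s)
    -- (A2)
    (η0 : ℝ → ℝ)
    (hη0diff : ContDiffOn ℝ 1 η0 (Ici 0))
    (hη0anti : AntitoneOn η0 (Ici 0))
    (hη0nonneg : ∀ t ∈ Ici (0 : ℝ), 0 ≤ η0 t)
    -- (A3): conditionally centered errors with finite second moment
    (hcondmean : μ[ε | MeasurableSpace.comap X inferInstance] =ᵐ[μ] 0)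
    (hε2 : Integrable (fun ω => ε ω ^ 2) μ)
    -- the response
    (Y : Ω → ℝ) (hY : ∀ ω, Y ω = η0 (‖θ0 - X ω‖ ^ 2) + ε ω)
    -- the population profiled attenuation function η_θ
    (ηpop : EuclideanSpace ℝ (Fin d) → ℝ → ℝ)
    (hηpop : ∀ θ, (fun ω => ηpop θ (‖θ - X ω‖ ^ 2)) =ᵐ[μ]
      μ[fun ω => η0 (‖θ0 - X ω‖ ^ 2) |
        MeasurableSpace.comap (fun ω => ‖θ - X ω‖ ^ 2) inferInstance])
    -- the population score map
    (Mpop : EuclideanSpace ℝ (Fin d) → EuclideanSpace ℝ (Fin d))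
    (hMpop : ∀ θ, ∀ j : Fin d, Mpop θ j =
      ∫ ω, (Y ω - ηpop θ (‖θ - X ω‖ ^ 2)) * (X ω j - θ j) ∂μ) :
    ∀ θ ∈ Θ,
      -- (i) M(θ) is the expected conditional covariance of X and η0(|θ0-X|²) given |θ-X|²
      (∀ j : Fin d, Mpop θ j =
        ∫ ω, ((μ[fun ω' => X ω' j * η0 (‖θ0 - X ω'‖ ^ 2) |
            MeasurableSpace.comap (fun ω'' => ‖θ - X ω''‖ ^ 2) inferInstance]) ω -
          (μ[fun ω' => X ω' j |
            MeasurableSpace.comap (fun ω'' => ‖θ - X ω''‖ ^ 2) inferInstance]) ω *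
          (μ[fun ω' => η0 (‖θ0 - X ω'‖ ^ 2) |
            MeasurableSpace.comap (fun ω'' => ‖θ - X ω''‖ ^ 2) inferInstance]) ω) ∂μ) ∧
      -- (ii) θ0 is a zero of the population score map
      Mpop θ0 = 0 ∧
      -- (iii) the conditional covariance has an a.s. constant (nonpositive) sign …
      (∀ᵐ ω ∂μ,
        (μ[fun ω' => (∑ j, (θ - θ0) j * (X ω' j - θ j)) * η0 (‖θ0 - X ω'‖ ^ 2) |
            MeasurableSpace.comap (fun ω'' => ‖θ - X ω''‖ ^ 2) inferInstance]) ω -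
          (μ[fun ω' => ∑ j, (θ - θ0) j * (X ω' j - θ j) |
            MeasurableSpace.comap (fun ω'' => ‖θ - X ω''‖ ^ 2) inferInstance]) ω *
          (μ[fun ω' => η0 (‖θ0 - X ω'‖ ^ 2) |
            MeasurableSpace.comap (fun ω'' => ‖θ - X ω''‖ ^ 2) inferInstance]) ω ≤ 0) ∧
      -- … so that (θ-θ0)ᵀ M(θ) equals its expectation and is nonpositive
      ((∑ j, (θ - θ0) j * Mpop θ j) =
        ∫ ω, ((μ[fun ω' => (∑ j, (θ - θ0) j * (X ω' j - θ j)) * η0 (‖θ0 - X ω'‖ ^ 2) |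
            MeasurableSpace.comap (fun ω'' => ‖θ - X ω''‖ ^ 2) inferInstance]) ω -
          (μ[fun ω' => ∑ j, (θ - θ0) j * (X ω' j - θ j) |
            MeasurableSpace.comap (fun ω'' => ‖θ - X ω''‖ ^ 2) inferInstance]) ω *
          (μ[fun ω' => η0 (‖θ0 - X ω'‖ ^ 2) |
            MeasurableSpace.comap (fun ω'' => ‖θ - X ω''‖ ^ 2) inferInstance]) ω) ∂μ) ∧
      ((∑ j, (θ - θ0) j * Mpop θ j) ≤ 0) := by
  classical
  -- global preliminaries
  have hθ0Θ : θ0 ∈ Θ := interior_subset hθ0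
  have hT0 : (0:ℝ) ≤ T := (norm_nonneg θ0).trans (hΘT θ0 hθ0Θ)
  have hXT : ∀ᵐ ω ∂μ, ‖X ω‖ ≤ T := hXχ.mono fun ω hω => hχT _ hω
  have coord : ∀ (x : EuclideanSpace ℝ (Fin d)) (j : Fin d), |x j| ≤ ‖x‖ := by
    intro x j
    rw [EuclideanSpace.norm_eq]
    have h1 : |x j| = Real.sqrt (‖x j‖ ^ 2) := by
      rw [Real.sqrt_sq (norm_nonneg _)]; exact (Real.norm_eq_abs _).symm
    rw [h1]
    exact Real.sqrt_le_sqrt (Finset.single_le_sum (f := fun i => ‖x i‖ ^ 2)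
      (fun i _ => by positivity) (Finset.mem_univ j))
  have hεInt : Integrable ε μ := by
    refine Integrable.mono' (hε2.add (integrable_const 1)) hεmeas.aestronglyMeasurable
      (Eventually.of_forall fun ω => ?_)
    rw [Real.norm_eq_abs]
    show |ε ω| ≤ ε ω ^ 2 + 1
    nlinarith [sq_nonneg (|ε ω| - 1), sq_abs (ε ω), abs_nonneg (ε ω)]
  have hmX : MeasurableSpace.comap X inferInstance ≤ _ := hXmeas.comap_le
  have hXcm : Measurable[MeasurableSpace.comap X inferInstance] X :=
    Measurable.of_comap_le le_rfl
  -- the extended link function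
  set η0' : ℝ → ℝ := fun t => η0 (max t 0) with hη0'def
  have hη0'cont : Continuous η0' :=
    (hη0diff.continuousOn).comp_continuous (continuous_id.max continuous_const)
      (fun t => mem_Ici.mpr (le_max_right _ _))
  have hη0'anti : Antitone η0' := fun a b hab =>
    hη0anti (mem_Ici.mpr (le_max_right a 0)) (mem_Ici.mpr (le_max_right b 0))
      (max_le_max hab le_rfl)
  have hη00 : 0 ≤ η0 0 := hη0nonneg 0 (mem_Ici.mpr le_rfl)
  have hη0'bdd : ∀ t, |η0' t| ≤ η0 0 := by
    intro t
    rw [hη0'def, abs_of_nonneg (hη0nonneg _ (mem_Ici.mpr (le_max_right _ _)))]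
    exact hη0anti (mem_Ici.mpr le_rfl) (mem_Ici.mpr (le_max_right _ _)) (le_max_right _ _)
  have hargs : ∀ (θ' : EuclideanSpace ℝ (Fin d)) ω, (0:ℝ) ≤ ‖θ' - X ω‖ ^ 2 :=
    fun θ' ω => by positivity
  set f : Ω → ℝ := fun ω => η0 (‖θ0 - X ω‖ ^ 2) with hfdef
  have hfeq' : ∀ ω, f ω = η0' (‖θ0 - X ω‖ ^ 2) := by
    intro ω
    simp only [hfdef, hη0'def, max_eq_left (hargs θ0 ω)]
  have hgmeas : ∀ θ' : EuclideanSpace ℝ (Fin d), Measurable (fun ω => ‖θ' - X ω‖ ^ 2) :=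
    fun θ' => (((continuous_const.sub continuous_id).norm.pow 2).measurable).comp hXmeas
  have hfmeas : Measurable f := by
    have h : f = fun ω => η0' (‖θ0 - X ω‖ ^ 2) := funext hfeq'
    rw [h]
    exact hη0'cont.measurable.comp (hgmeas θ0)
  have hfb : ∀ ω, |f ω| ≤ η0 0 := fun ω => by rw [hfeq' ω]; exact hη0'bdd _
  -- ε-orthogonality against σ(X)-functions
  have heps : ∀ (q : Ω → ℝ), Measurable[MeasurableSpace.comap X inferInstance] q →
      ∀ (C : ℝ), (∀ᵐ ω ∂μ, |q ω| ≤ C) → ∫ ω, ε ω * q ω ∂μ = 0 := by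
    intro q hq C hqb
    have hqamb : Measurable q := hq.mono hmX le_rfl
    have hint : Integrable (fun ω => ε ω * q ω) μ :=
      int_mul_bdd μ hεInt hqamb.aestronglyMeasurable C hqb
    refine eps_orth hmX μ hq.stronglyMeasurable hεInt
      (hint.congr (Eventually.of_forall fun ω => by simp [mul_comm])) hcondmean
  -- coordinate helpers
  have hXj : ∀ j : Fin d, Measurable (fun ω => X ω j) :=
    fun j => (measurable_pi_apply j).comp ((WithLp.measurable_ofLp 2 _).comp hXmeas)
  have hXjc : ∀ j : Fin d, Measurable[MeasurableSpace.comap X inferInstance] (fun ω => X ω j) :=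
    fun j => (measurable_pi_apply j).comp ((WithLp.measurable_ofLp 2 _).comp hXcm)
  have hq2T : ∀ (θ' : EuclideanSpace ℝ (Fin d)), ‖θ'‖ ≤ T → ∀ j : Fin d,
      ∀ᵐ ω ∂μ, |X ω j - θ' j| ≤ 2 * T := by
    intro θ' hθ' j
    filter_upwards [hXT] with ω hω
    calc |X ω j - θ' j| ≤ |X ω j| + |θ' j| := abs_sub _ _
      _ ≤ T + T := add_le_add ((coord _ j).trans hω) ((coord θ' j).trans hθ')
      _ = 2 * T := by ring
  -- part (ii), independent of θ
  have hMθ0 : Mpop θ0 = 0 := by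
    have hm0 : MeasurableSpace.comap (fun ω => ‖θ0 - X ω‖ ^ 2) inferInstance ≤ _ :=
      (hgmeas θ0).comap_le
    have hfsm0 : StronglyMeasurable[MeasurableSpace.comap
        (fun ω => ‖θ0 - X ω‖ ^ 2) inferInstance] f := by
      have h : f = fun ω => η0' (‖θ0 - X ω‖ ^ 2) := funext hfeq'
      rw [h]
      exact (hη0'cont.measurable.comp (Measurable.of_comap_le le_rfl)).stronglyMeasurable
    have hfInt : Integrable f μ :=
      bdd_int μ hfmeas.aestronglyMeasurable (η0 0) (Eventually.of_forall hfb)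
    have hfcond : μ[f|MeasurableSpace.comap (fun ω => ‖θ0 - X ω‖ ^ 2) inferInstance] = f :=
      condExp_of_stronglyMeasurable hm0 hfsm0 hfInt
    refine PiLp.ext fun j => ?_
    rw [hMpop θ0 j]
    have hcongr : (fun ω => (Y ω - ηpop θ0 (‖θ0 - X ω‖ ^ 2)) * (X ω j - θ0 j))
        =ᵐ[μ] fun ω => ε ω * (X ω j - θ0 j) := by
      filter_upwards [hηpop θ0] with ω hω
      have hω' : ηpop θ0 (‖θ0 - X ω‖ ^ 2)
          = (μ[f|MeasurableSpace.comap (fun ω => ‖θ0 - X ω‖ ^ 2) inferInstance]) ω := hω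
      rw [hY ω, hω', hfcond]
      show (f ω + ε ω - f ω) * (X ω j - θ0 j) = ε ω * (X ω j - θ0 j)
      ring
    rw [integral_congr_ae hcongr]
    exact heps _ ((hXjc j).sub measurable_const) (2 * T) (hq2T θ0 (hΘT θ0 hθ0Θ) j)
  -- main part
  intro θ hθ
  have hθT : ‖θ‖ ≤ T := hΘT θ hθ
  have hm : MeasurableSpace.comap (fun ω => ‖θ - X ω‖ ^ 2) inferInstance ≤ _ :=
    (hgmeas θ).comap_le
  -- part (i)
  have hpart1 : ∀ j : Fin d, Mpop θ j =
      ∫ ω, ((μ[fun ω' => X ω' j * η0 (‖θ0 - X ω'‖ ^ 2) |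
          MeasurableSpace.comap (fun ω'' => ‖θ - X ω''‖ ^ 2) inferInstance]) ω -
        (μ[fun ω' => X ω' j |
          MeasurableSpace.comap (fun ω'' => ‖θ - X ω''‖ ^ 2) inferInstance]) ω *
        (μ[fun ω' => η0 (‖θ0 - X ω'‖ ^ 2) |
          MeasurableSpace.comap (fun ω'' => ‖θ - X ω''‖ ^ 2) inferInstance]) ω) ∂μ := by
    intro j
    rw [hMpop θ j]
    have hrw : ∫ ω, (Y ω - ηpop θ (‖θ - X ω‖ ^ 2)) * (X ω j - θ j) ∂μ
        = ∫ ω, (f ω + ε ω - ηpop θ (‖θ - X ω‖ ^ 2)) * (X ω j - θ j) ∂μ :=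
      integral_congr_ae (Eventually.of_forall fun ω => by simp only [hY]; rfl)
    rw [hrw]
    have hpjb : ∀ᵐ ω ∂μ, |X ω j| ≤ T := hXT.mono fun ω h => (coord _ j).trans h
    exact cov_master hm μ f (fun ω => X ω j) ε (fun ω => ηpop θ (‖θ - X ω‖ ^ 2)) (θ j)
      (η0 0) T hη00 hT0 hfmeas.aestronglyMeasurable (hXj j).aestronglyMeasurable
      (Eventually.of_forall hfb) hpjb
      (heps _ ((hXjc j).sub measurable_const) (2 * T) (hq2T θ hθT j))
      (int_mul_bdd μ hεInt ((hXj j).sub measurable_const).aestronglyMeasurable (2 * T)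
        (hq2T θ hθT j))
      (hηpop θ)
  -- the linear statistic U
  set U : Ω → ℝ := fun ω => ∑ j, (θ - θ0) j * (X ω j - θ j) with hUdef
  have hqUcont : Continuous (fun x : EuclideanSpace ℝ (Fin d) =>
      ∑ j, (θ - θ0) j * (x j - θ j)) :=
    continuous_finset_sum _ fun j _ =>
      continuous_const.mul (((continuous_apply j).comp (PiLp.continuous_ofLp 2 _)).sub continuous_const)
  have hUmeas : Measurable U := hqUcont.measurable.comp hXmeas
  have hUcm : Measurable[MeasurableSpace.comap X inferInstance] U :=
    hqUcont.measurable.comp hXcm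
  set CU : ℝ := (∑ j, |(θ - θ0) j|) * (2 * T) with hCUdef
  have hCU0 : (0:ℝ) ≤ CU :=
    mul_nonneg (Finset.sum_nonneg fun j _ => abs_nonneg _) (by linarith)
  have hUb : ∀ᵐ ω ∂μ, |U ω| ≤ CU := by
    filter_upwards [hXT] with ω hω
    calc |U ω| ≤ ∑ j, |(θ - θ0) j * (X ω j - θ j)| := Finset.abs_sum_le_sum_abs _ _
      _ ≤ ∑ j, |(θ - θ0) j| * (2 * T) := by
          refine Finset.sum_le_sum fun j _ => ?_
          rw [abs_mul]
          refine mul_le_mul_of_nonneg_left ?_ (abs_nonneg _)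
          calc |X ω j - θ j| ≤ |X ω j| + |θ j| := abs_sub _ _
            _ ≤ T + T := add_le_add ((coord _ j).trans hω) ((coord θ j).trans hθT)
            _ = 2 * T := by ring
      _ = CU := by rw [hCUdef, Finset.sum_mul]
  -- the key geometric identity
  have keyid : ∀ ω, ‖θ0 - X ω‖ ^ 2 = ‖θ - X ω‖ ^ 2 + ‖θ - θ0‖ ^ 2 + 2 * U ω := by
    intro ω
    have h2 : θ - X ω - (θ - θ0) = θ0 - X ω := by abel
    have h := norm_sub_sq_real (θ - X ω) (θ - θ0)
    rw [h2] at h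
    have h3 : ⟪θ - X ω, θ - θ0⟫ = ∑ j, (θ j - X ω j) * (θ j - θ0 j) := by
      rw [PiLp.inner_apply]
      exact Finset.sum_congr rfl fun j _ => by
        simp [RCLike.inner_apply, conj_trivial]; ring
    have h4 : ⟪θ - X ω, θ - θ0⟫ = - U ω := by
      rw [h3, hUdef]
      show ∑ j, (θ j - X ω j) * (θ j - θ0 j)
        = - ∑ j, (θ - θ0) j * (X ω j - θ j)
      rw [← Finset.sum_neg_distrib]
      exact Finset.sum_congr rfl fun j _ => by
        show (θ j - X ω j) * (θ j - θ0 j) = -((θ j - θ0 j) * (X ω j - θ j))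
        ring
    rw [h4] at h
    linarith [h]
  have hfeqU : ∀ ω, f ω = η0' (‖θ - X ω‖ ^ 2 + ‖θ - θ0‖ ^ 2 + 2 * U ω) := fun ω => by
    rw [hfeq' ω, keyid ω]
  have hgm' : Measurable[MeasurableSpace.comap (fun ω => ‖θ - X ω‖ ^ 2) inferInstance]
      (fun ω => ‖θ - X ω‖ ^ 2) := Measurable.of_comap_le le_rfl
  -- part (iii)
  have hiii := cov_sign hm μ U (fun ω => ‖θ - X ω‖ ^ 2) f η0' (‖θ - θ0‖ ^ 2) CU (η0 0)
    hCU0 hη0'anti hη0'cont.measurable hη0'bdd hgm' hfeqU hUmeas.aestronglyMeasurable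
    hfmeas.aestronglyMeasurable hUb
  -- part (iv)
  have hcondaesm : AEStronglyMeasurable
      (μ[f|MeasurableSpace.comap (fun ω => ‖θ - X ω‖ ^ 2) inferInstance]) μ :=
    (stronglyMeasurable_condExp.mono hm).aestronglyMeasurable
  have hmfb : ∀ᵐ ω ∂μ,
      |(μ[f|MeasurableSpace.comap (fun ω => ‖θ - X ω‖ ^ 2) inferInstance]) ω| ≤ η0 0 :=
    ae_bdd_condexp' (η0 0) hη00 (Eventually.of_forall hfb)
  have hterm : ∀ j : Fin d, Integrable
      (fun ω => (θ - θ0) j * ((Y ω - ηpop θ (‖θ - X ω‖ ^ 2)) * (X ω j - θ j))) μ := by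
    intro j
    have h1 : Integrable (fun ω =>
        (f ω - (μ[f|MeasurableSpace.comap (fun ω => ‖θ - X ω‖ ^ 2) inferInstance]) ω)
          * (X ω j - θ j)) μ := by
      refine bdd_int μ ((hfmeas.aestronglyMeasurable.sub hcondaesm).mul
        ((hXj j).sub measurable_const).aestronglyMeasurable) ((η0 0 + η0 0) * (2 * T)) ?_
      filter_upwards [hmfb, hq2T θ hθT j] with ω w1 w2
      rw [abs_mul]
      exact mul_le_mul ((abs_sub _ _).trans (add_le_add (hfb ω) w1)) w2 (abs_nonneg _)
        (by positivity)
    have h2 : Integrable (fun ω => ε ω * (X ω j - θ j)) μ :=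
      int_mul_bdd μ hεInt ((hXj j).sub measurable_const).aestronglyMeasurable (2 * T)
        (hq2T θ hθT j)
    refine ((h1.add h2).congr ?_).const_mul _
    filter_upwards [hηpop θ] with ω hω
    have hω' : ηpop θ (‖θ - X ω‖ ^ 2)
        = (μ[f|MeasurableSpace.comap (fun ω => ‖θ - X ω‖ ^ 2) inferInstance]) ω := hω
    show (f ω - _) * (X ω j - θ j) + ε ω * (X ω j - θ j)
      = (Y ω - ηpop θ (‖θ - X ω‖ ^ 2)) * (X ω j - θ j)
    rw [hY ω, hω']
    ring
  have hsum : (∑ j, (θ - θ0) j * Mpop θ j)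
      = ∫ ω, (Y ω - ηpop θ (‖θ - X ω‖ ^ 2)) * U ω ∂μ := by
    calc ∑ j, (θ - θ0) j * Mpop θ j
        = ∑ j, ∫ ω, (θ - θ0) j * ((Y ω - ηpop θ (‖θ - X ω‖ ^ 2)) * (X ω j - θ j)) ∂μ :=
          Finset.sum_congr rfl fun j _ => by rw [hMpop θ j, integral_const_mul]
      _ = ∫ ω, ∑ j, (θ - θ0) j * ((Y ω - ηpop θ (‖θ - X ω‖ ^ 2)) * (X ω j - θ j)) ∂μ :=
          (integral_finset_sum _ fun j _ => hterm j).symm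
      _ = ∫ ω, (Y ω - ηpop θ (‖θ - X ω‖ ^ 2)) * U ω ∂μ := by
          refine integral_congr_ae (Eventually.of_forall fun ω => ?_)
          show ∑ j, (θ - θ0) j * ((Y ω - ηpop θ (‖θ - X ω‖ ^ 2)) * (X ω j - θ j))
            = (Y ω - ηpop θ (‖θ - X ω‖ ^ 2)) * ∑ j, (θ - θ0) j * (X ω j - θ j)
          rw [Finset.mul_sum]
          exact Finset.sum_congr rfl fun j _ => by ring
  have hep0 : ∫ ω, ε ω * (U ω - 0) ∂μ = 0 := by
    simp only [sub_zero]
    exact heps U hUcm CU hUb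
  have hepInt0 : Integrable (fun ω => ε ω * (U ω - 0)) μ := by
    refine (int_mul_bdd μ hεInt hUmeas.aestronglyMeasurable CU hUb).congr
      (Eventually.of_forall fun ω => ?_)
    show ε ω * U ω = ε ω * (U ω - 0)
    rw [sub_zero]
  have hcov := cov_master hm μ f U ε (fun ω => ηpop θ (‖θ - X ω‖ ^ 2)) 0 (η0 0) CU hη00 hCU0
    hfmeas.aestronglyMeasurable hUmeas.aestronglyMeasurable (Eventually.of_forall hfb) hUb
    hep0 hepInt0 (hηpop θ)
  have hiv : (∑ j, (θ - θ0) j * Mpop θ j)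
      = ∫ ω, ((μ[fun ω' => (∑ j, (θ - θ0) j * (X ω' j - θ j)) * η0 (‖θ0 - X ω'‖ ^ 2) |
          MeasurableSpace.comap (fun ω'' => ‖θ - X ω''‖ ^ 2) inferInstance]) ω -
        (μ[fun ω' => ∑ j, (θ - θ0) j * (X ω' j - θ j) |
          MeasurableSpace.comap (fun ω'' => ‖θ - X ω''‖ ^ 2) inferInstance]) ω *
        (μ[fun ω' => η0 (‖θ0 - X ω'‖ ^ 2) |
          MeasurableSpace.comap (fun ω'' => ‖θ - X ω''‖ ^ 2) inferInstance]) ω) ∂μ := by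
    rw [hsum]
    have hstep : ∫ ω, (Y ω - ηpop θ (‖θ - X ω‖ ^ 2)) * U ω ∂μ
        = ∫ ω, (f ω + ε ω - ηpop θ (‖θ - X ω‖ ^ 2)) * (U ω - 0) ∂μ := by
      refine integral_congr_ae (Eventually.of_forall fun ω => ?_)
      show (Y ω - ηpop θ (‖θ - X ω‖ ^ 2)) * U ω
        = (f ω + ε ω - ηpop θ (‖θ - X ω‖ ^ 2)) * (U ω - 0)
      rw [hY ω, sub_zero]
    rw [hstep]
    exact hcov
  refine ⟨hpart1, hMθ0, hiii, hiv, ?_⟩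
  rw [hiv]
  exact integral_nonpos_of_ae hiii
end
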